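/- arXiv:2405.16212 — 9 statements merged into one kernel-verified Lean document; each statement's English description precedes it below -/
import Mathlib

section
/- Let D be a subset of the real numbers and f : D → [0,∞) a map such that for every t ∈ D one has 1−t ∈ D and f(t)+f(1−t)=1. Let X be a pre-Hilbert module over a C*-algebra A and φ a positive linear functional on A. If n ≥ 2 and x₁,…,xₙ, z ∈ X satisfy φ(|z|²)=1, then for every ξ ∈ D and every nonzero complex number α: |∏_{i=1}^{n} φ(⟨x_i,z⟩)|² ≤ (max{1,|α−1|²}/|α|²)·∏_{i=1}^{n} φ(|x_i|²) + (f(1−ξ)/|α|²)·|φ(⟨x₁,x₂⟩)·∏_{i=3}^{n} φ(⟨x_i,z⟩)|² + ((f(ξ)+2·max{1,|α−1|})/|α|²)·∏_{i=1}^{n} √(φ(|x_i|²))·|φ(⟨x₁,x₂⟩)·∏_{i=3}^{n} φ(⟨x_i,z⟩)|. -/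
set_option maxHeartbeats 1000000

open scoped ComplexOrder RightActions

/-- The December 2024 Mathlib `CStarModule` (right `Aᵐᵒᵖ`-action); Mathlib's class now uses a
left action with different axioms, so the old class is restated here. -/
class CStarModuleOld (A E : Type*) [NonUnitalSemiring A] [StarRing A] [Module ℂ A]
    [AddCommGroup E] [Module ℂ E] [PartialOrder A] [SMul Aᵐᵒᵖ E] [Norm A] [Norm E]
    extends Inner A E where
  inner_add_right {x} {y} {z} : inner x (y + z) = inner x y + inner x z
  inner_self_nonneg {x} : 0 ≤ inner x x
  inner_self {x} : inner x x = 0 ↔ x = 0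
  inner_op_smul_right {a : A} {x y : E} : inner x (y <• a) = inner x y * a
  inner_smul_right_complex {z : ℂ} {x} {y} : inner x (z • y) = z • inner x y
  star_inner x y : star (inner x y) = inner y x
  norm_eq_sqrt_norm_inner_self x : ‖x‖ = √‖inner x x‖

namespace CStarModuleOld

variable {A X : Type*} [NonUnitalCStarAlgebra A] [PartialOrder A] [StarOrderedRing A]
    [AddCommGroup X] [Module ℂ X] [SMul Aᵐᵒᵖ X] [Norm X] [CStarModuleOld A X]

lemma inner_add_left {x y z : X} : inner A (x + y) z = inner A x z + inner A y z := by
  rw [← CStarModuleOld.star_inner z (x + y), CStarModuleOld.inner_add_right, star_add,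
    CStarModuleOld.star_inner, CStarModuleOld.star_inner]

lemma inner_smul_left_complex {w : ℂ} {x y : X} : inner A (w • x) y = star w • inner A x y := by
  rw [← CStarModuleOld.star_inner y (w • x), CStarModuleOld.inner_smul_right_complex, star_smul,
    CStarModuleOld.star_inner]

lemma inner_sub_right {x y z : X} : inner A x (y - z) = inner A x y - inner A x z :=
  (AddMonoidHom.mk' (fun w : X => inner A x w)
    (fun _ _ => CStarModuleOld.inner_add_right)).map_sub y z

lemma inner_sub_left {x y z : X} : inner A (x - y) z = inner A x z - inner A y z :=
  (AddMonoidHom.mk' (fun w : X => inner A w z)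
    (fun _ _ => CStarModuleOld.inner_add_left)).map_sub x y

end CStarModuleOld


section BuzanoAux

variable {A X : Type*} [NonUnitalCStarAlgebra A] [PartialOrder A] [StarOrderedRing A]
    [AddCommGroup X] [Module ℂ X] [SMul Aᵐᵒᵖ X] [Norm X] [CStarModuleOld A X]

private lemma phi_self_nonneg (φ : A →ₗ[ℂ] ℂ) (hφ : ∀ b : A, 0 ≤ b → 0 ≤ φ b) (x : X) :
    0 ≤ (φ (inner A x x)).re ∧ (φ (inner A x x)).im = 0 := by
  have h := hφ _ (CStarModuleOld.inner_self_nonneg (x := x))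
  rw [Complex.nonneg_iff] at h
  exact ⟨h.1, h.2.symm⟩

private lemma phi_conj (φ : A →ₗ[ℂ] ℂ) (hφ : ∀ b : A, 0 ≤ b → 0 ≤ φ b) (x y : X) :
    φ (inner A y x) = (starRingEnd ℂ) (φ (inner A x y)) := by
  set c := φ (inner A x y) with hc
  set d := φ (inner A y x) with hd
  have e1 : φ (inner A (x + y) (x + y))
      = φ (inner A x x) + φ (inner A y y) + (c + d) := by
    simp only [CStarModuleOld.inner_add_right, CStarModuleOld.inner_add_left, map_add, hc, hd]
    ring
  have e2 : φ (inner A ((Complex.I • x) + y) ((Complex.I • x) + y))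
      = φ (inner A x x) + φ (inner A y y) + (-Complex.I * c + Complex.I * d) := by
    simp only [CStarModuleOld.inner_add_right, CStarModuleOld.inner_add_left,
      CStarModuleOld.inner_smul_left_complex, CStarModuleOld.inner_smul_right_complex,
      map_add, map_smul, smul_smul, smul_eq_mul, RCLike.star_def, Complex.conj_I]
    rw [← hc, ← hd]
    linear_combination (-(φ (inner A x x))) * Complex.I_sq
  have h1 := (phi_self_nonneg φ hφ (x + y)).2
  have h2 := (phi_self_nonneg φ hφ ((Complex.I • x) + y)).2
  rw [e1] at h1
  rw [e2] at h2
  have hx0 := (phi_self_nonneg φ hφ x).2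
  have hy0 := (phi_self_nonneg φ hφ y).2
  simp only [Complex.add_im, Complex.mul_im, Complex.neg_re, Complex.neg_im,
    Complex.I_re, Complex.I_im] at h1 h2
  apply Complex.ext
  · simp only [Complex.conj_re]; nlinarith [h2]
  · simp only [Complex.conj_im]; nlinarith [h1]

private lemma phi_cs (φ : A →ₗ[ℂ] ℂ) (hφ : ∀ b : A, 0 ≤ b → 0 ≤ φ b) (x y : X) :
    ‖φ (inner A x y)‖ ^ 2
      ≤ (φ (inner A x x)).re * (φ (inner A y y)).re := by
  set c := φ (inner A x y) with hc
  set a := (φ (inner A x x)).re with ha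
  set b := (φ (inner A y y)).re with hb
  have ha0 : 0 ≤ a := (phi_self_nonneg φ hφ x).1
  have hb0 : 0 ≤ b := (phi_self_nonneg φ hφ y).1
  have hbim : (φ (inner A y y)).im = 0 := (phi_self_nonneg φ hφ y).2
  have hγ : 0 ≤ ‖c‖ ^ 2 := by positivity
  have key : ∀ s : ℝ, 0 ≤ a - 2 * s * ‖c‖ ^ 2 + s ^ 2 * ‖c‖ ^ 2 * b := by
    intro s
    set t : ℂ := (s : ℂ) * (starRingEnd ℂ) c with ht
    have expand : φ (inner A (x - t • y) (x - t • y))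
        = φ (inner A x x) - t * c - (starRingEnd ℂ) t * (starRingEnd ℂ) c
          + (starRingEnd ℂ) t * t * φ (inner A y y) := by
      simp only [CStarModuleOld.inner_sub_right, CStarModuleOld.inner_sub_left,
        CStarModuleOld.inner_smul_left_complex, CStarModuleOld.inner_smul_right_complex,
        map_sub, map_smul, smul_eq_mul, RCLike.star_def]
      rw [phi_conj φ hφ x y, ← hc]
      ring
    have htc : t * c = ((s * ‖c‖ ^ 2 : ℝ) : ℂ) := by
      rw [ht, mul_assoc, mul_comm ((starRingEnd ℂ) c) c, Complex.mul_conj,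
        Complex.normSq_eq_norm_sq]
      push_cast
      ring
    have htc2 : (starRingEnd ℂ) t * (starRingEnd ℂ) c = ((s * ‖c‖ ^ 2 : ℝ) : ℂ) := by
      rw [← map_mul, htc, Complex.conj_ofReal]
    have htt : (starRingEnd ℂ) t * t = ((s ^ 2 * ‖c‖ ^ 2 : ℝ) : ℂ) := by
      rw [ht, map_mul, Complex.conj_ofReal, Complex.conj_conj]
      rw [show (s:ℂ) * c * ((s:ℂ) * (starRingEnd ℂ) c)
          = (s:ℂ)^2 * (c * (starRingEnd ℂ) c) by ring,
        Complex.mul_conj, Complex.normSq_eq_norm_sq]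
      push_cast
      ring
    have hnn := (phi_self_nonneg φ hφ (x - t • y)).1
    rw [expand, htc, htc2, htt] at hnn
    simp only [Complex.add_re, Complex.sub_re, Complex.ofReal_re, Complex.mul_re,
      Complex.ofReal_im, hbim] at hnn
    rw [← ha] at hnn
    linarith [hnn]
  rcases eq_or_lt_of_le hb0 with hbz | hbpos
  · have hcz : ‖c‖ ^ 2 ≤ 0 := by
      by_contra hpos
      push_neg at hpos
      have hk := key ((a + 1) / (2 * ‖c‖ ^ 2))
      rw [← hbz] at hk
      have : 2 * ((a + 1) / (2 * ‖c‖ ^ 2)) * ‖c‖ ^ 2 = a + 1 := by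
        have hc0 : ‖c‖ ≠ 0 := fun h => by rw [h] at hpos; norm_num at hpos
        field_simp
      nlinarith [hk, this]
    nlinarith [hγ, hcz, ha0]
  · have hk := key (1 / b)
    have h1 : 2 * (1 / b) * ‖c‖ ^ 2 = 2 * (‖c‖ ^ 2 / b) := by ring
    have h2 : (1 / b) ^ 2 * ‖c‖ ^ 2 * b = ‖c‖ ^ 2 / b := by
      field_simp
    rw [h1, h2] at hk
    have := mul_le_mul_of_nonneg_right (by linarith : ‖c‖ ^ 2 / b ≤ a) (le_of_lt hbpos)
    rwa [div_mul_cancel₀ _ (ne_of_gt hbpos)] at this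

private lemma buzano_core (φ : A →ₗ[ℂ] ℂ) (hφ : ∀ b : A, 0 ≤ b → 0 ≤ φ b)
    (z x₁ x₂ : X) (hz : φ (inner A z z) = 1) (α : ℂ) :
    ‖α * φ (inner A z x₂) * φ (inner A x₁ z) - φ (inner A x₁ x₂)‖ ^ 2
      ≤ max 1 (‖α - 1‖ ^ 2)
          * ((φ (inner A x₁ x₁)).re * (φ (inner A x₂ x₂)).re) := by
  set c := φ (inner A z x₂) with hc
  set v := (α * c) • z - x₂ with hv
  have hBv : φ (inner A x₁ v) = α * c * φ (inner A x₁ z) - φ (inner A x₁ x₂) := by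
    simp only [hv, CStarModuleOld.inner_sub_right, CStarModuleOld.inner_smul_right_complex,
      map_sub, map_smul, smul_eq_mul]
  have expand : φ (inner A v v)
      = (starRingEnd ℂ) (α * c) * (α * c) - (starRingEnd ℂ) (α * c) * c
        - (α * c) * (starRingEnd ℂ) c + φ (inner A x₂ x₂) := by
    simp only [hv, CStarModuleOld.inner_sub_right, CStarModuleOld.inner_sub_left,
      CStarModuleOld.inner_smul_right_complex, CStarModuleOld.inner_smul_left_complex,
      map_sub, map_smul, smul_eq_mul, RCLike.star_def]
    rw [hz, phi_conj φ hφ z x₂, ← hc]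
    ring
  have hre : (φ (inner A v v)).re
      = Complex.normSq α * Complex.normSq c - 2 * α.re * Complex.normSq c
        + (φ (inner A x₂ x₂)).re := by
    rw [expand]
    simp only [Complex.add_re, Complex.sub_re, Complex.mul_re, Complex.mul_im,
      Complex.conj_re, Complex.conj_im, Complex.normSq_apply]
    ring
  have hcs := phi_cs φ hφ x₁ v
  rw [hBv] at hcs
  have hzr : (φ (inner A z z)).re = 1 := by rw [hz]; simp
  have hcsz := phi_cs φ hφ z x₂
  rw [hzr, ← hc, one_mul] at hcsz
  have ha1 : 0 ≤ (φ (inner A x₁ x₁)).re := (phi_self_nonneg φ hφ x₁).1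
  have hb2 : 0 ≤ (φ (inner A x₂ x₂)).re := (phi_self_nonneg φ hφ x₂).1
  have hM1 : (1:ℝ) ≤ max 1 (‖α - 1‖ ^ 2) := le_max_left _ _
  have hM2 : ‖α - 1‖ ^ 2 ≤ max 1 (‖α - 1‖ ^ 2) := le_max_right _ _
  have hnsc : Complex.normSq c = ‖c‖ ^ 2 := Complex.normSq_eq_norm_sq c
  have hnsα1 : ‖α - 1‖ ^ 2 = Complex.normSq α - 2 * α.re + 1 := by
    rw [← Complex.normSq_eq_norm_sq]
    simp only [Complex.normSq_apply, Complex.sub_re, Complex.sub_im, Complex.one_re,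
      Complex.one_im]
    ring
  have hγ0 : 0 ≤ Complex.normSq c := Complex.normSq_nonneg c
  have hvle : (φ (inner A v v)).re
      ≤ max 1 (‖α - 1‖ ^ 2) * (φ (inner A x₂ x₂)).re := by
    rw [hre]
    nlinarith [hcsz, hγ0, hM1, hM2, hnsα1, hnsc]
  calc ‖α * c * φ (inner A x₁ z) - φ (inner A x₁ x₂)‖ ^ 2
      ≤ (φ (inner A x₁ x₁)).re * (φ (inner A v v)).re := hcs
    _ ≤ (φ (inner A x₁ x₁)).re
          * (max 1 (‖α - 1‖ ^ 2) * (φ (inner A x₂ x₂)).re) :=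
        mul_le_mul_of_nonneg_left hvle ha1
    _ = max 1 (‖α - 1‖ ^ 2)
          * ((φ (inner A x₁ x₁)).re * (φ (inner A x₂ x₂)).re) := by ring

private lemma prod_split {M : Type*} [CommMonoid M] {n : ℕ} (hn : 2 ≤ n) (g : ℕ → M) :
    ∏ i ∈ Finset.Icc 1 n, g i = g 1 * (g 2 * ∏ i ∈ Finset.Icc 3 n, g i) := by
  have h1 : Finset.Icc 1 n = Finset.Ico 1 (n + 1) := (Finset.Ico_add_one_right_eq_Icc 1 n).symm
  have h2 : Finset.Icc 3 n = Finset.Ico 3 (n + 1) := (Finset.Ico_add_one_right_eq_Icc 3 n).symm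
  rw [h1, h2, ← Finset.prod_Ico_consecutive _ (by omega : 1 ≤ 3) (by omega : 3 ≤ n + 1)]
  have h3 : (Finset.Ico 1 3 : Finset ℕ) = {1, 2} := by decide
  rw [h3, Finset.prod_insert (by decide), Finset.prod_singleton, mul_assoc]

end BuzanoAux

/-- Theorem 2.1: extension of the Buzano inequality in pre-Hilbert
`C*`-modules. -/
theorem buzano_extension
    {A X : Type*} [NonUnitalCStarAlgebra A] [PartialOrder A] [StarOrderedRing A]
    [AddCommGroup X] [Module ℂ X] [SMul Aᵐᵒᵖ X] [Norm X] [CStarModuleOld A X]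
    (D : Set ℝ) (f : ℝ → ℝ)
    (hD : ∀ t ∈ D, (1 - t) ∈ D)
    (hf_nonneg : ∀ t ∈ D, 0 ≤ f t)
    (hf : ∀ t ∈ D, f t + f (1 - t) = 1)
    (φ : A →ₗ[ℂ] ℂ) (hφ : ∀ b : A, 0 ≤ b → 0 ≤ φ b)
    (n : ℕ) (hn : 2 ≤ n) (x : ℕ → X) (z : X)
    (hz : φ (inner A z z) = 1)
    (ξ : ℝ) (hξ : ξ ∈ D) (α : ℂ) (hα : α ≠ 0) :
    ‖∏ i ∈ Finset.Icc 1 n, φ (inner A (x i) z)‖ ^ 2 ≤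
      max 1 (‖α - 1‖ ^ 2) / ‖α‖ ^ 2 *
          ∏ i ∈ Finset.Icc 1 n, (φ (inner A (x i) (x i))).re
      + f (1 - ξ) / ‖α‖ ^ 2 *
          ‖φ (inner A (x 1) (x 2)) *
            ∏ i ∈ Finset.Icc 3 n, φ (inner A (x i) z)‖ ^ 2
      + (f ξ + 2 * max 1 (‖α - 1‖)) / ‖α‖ ^ 2 *
          (∏ i ∈ Finset.Icc 1 n, Real.sqrt (φ (inner A (x i) (x i))).re) *
          ‖φ (inner A (x 1) (x 2)) *
            ∏ i ∈ Finset.Icc 3 n, φ (inner A (x i) z)‖ := by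
  -- notation
  set K : ℝ := ‖α‖ ^ 2 with hKdef
  have hK : 0 < K := by
    have := norm_pos_iff.mpr hα
    positivity
  set M : ℝ := max 1 (‖α - 1‖) with hMdef
  set M2 : ℝ := max 1 (‖α - 1‖ ^ 2) with hM2def
  have hM1 : (1:ℝ) ≤ M := le_max_left _ _
  have habs0 : 0 ≤ ‖α - 1‖ := norm_nonneg _
  have hM2M : M2 = M ^ 2 := by
    rcases le_total (‖α - 1‖) 1 with h | h
    · rw [hM2def, hMdef, max_eq_left (by nlinarith), max_eq_left h]; norm_num
    · rw [hM2def, hMdef, max_eq_right (by nlinarith), max_eq_right h]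
  set a : ℕ → ℝ := fun i => (φ (inner A (x i) (x i))).re with hadef
  set g : ℕ → ℝ := fun i => ‖φ (inner A (x i) z)‖ with hgdef
  set Q : ℂ := ∏ i ∈ Finset.Icc 3 n, φ (inner A (x i) z) with hQdef
  set q : ℝ := ‖Q‖ with hqdef
  set β : ℝ := ‖φ (inner A (x 1) (x 2))‖ with hβdef
  have ha_nonneg : ∀ i, 0 ≤ a i := fun i => (phi_self_nonneg φ hφ (x i)).1
  have hg_nonneg : ∀ i, 0 ≤ g i := fun i => norm_nonneg _
  have hq0 : 0 ≤ q := norm_nonneg _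
  have hβ0 : 0 ≤ β := norm_nonneg _
  have hzr : (φ (inner A z z)).re = 1 := by rw [hz]; simp
  -- Cauchy–Schwarz against z
  have hgs : ∀ i, g i ^ 2 ≤ a i := by
    intro i
    have := phi_cs φ hφ (x i) z
    rw [hzr, mul_one] at this
    exact this
  -- two-factor Buzano inequality
  have core2 : K * (g 1 * g 2) ^ 2
      ≤ M2 * (a 1 * a 2) + f (1 - ξ) * β ^ 2
        + (f ξ + 2 * M) * (Real.sqrt (a 1) * Real.sqrt (a 2)) * β := by
    set c : ℂ := φ (inner A z (x 2)) with hcdef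
    set B1 : ℂ := φ (inner A (x 1) z) with hB1def
    set B12 : ℂ := φ (inner A (x 1) (x 2)) with hB12def
    have hcore := buzano_core φ hφ z (x 1) (x 2) hz α
    set E : ℝ := ‖α * c * B1 - B12‖ with hEdef
    have hE0 : 0 ≤ E := norm_nonneg _
    have habsc : ‖c‖ = g 2 := by
      rw [hcdef, phi_conj φ hφ (x 2) z, Complex.norm_conj]
    set s1 : ℝ := Real.sqrt (a 1) with hs1
    set s2 : ℝ := Real.sqrt (a 2) with hs2
    have hs1sq : s1 ^ 2 = a 1 := Real.sq_sqrt (ha_nonneg 1)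
    have hs2sq : s2 ^ 2 = a 2 := Real.sq_sqrt (ha_nonneg 2)
    have hs10 : 0 ≤ s1 := Real.sqrt_nonneg _
    have hs20 : 0 ≤ s2 := Real.sqrt_nonneg _
    have hE_le : E ≤ M * (s1 * s2) := by
      have hR0 : 0 ≤ M * (s1 * s2) := by positivity
      have hRsq : (M * (s1 * s2)) ^ 2 = M2 * (a 1 * a 2) := by
        rw [hM2M, show (M * (s1 * s2)) ^ 2 = M ^ 2 * (s1 ^ 2 * s2 ^ 2) by ring,
          hs1sq, hs2sq]
      have : E = Real.sqrt (E ^ 2) := (Real.sqrt_sq hE0).symm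
      rw [this]
      calc Real.sqrt (E ^ 2) ≤ Real.sqrt ((M * (s1 * s2)) ^ 2) :=
            Real.sqrt_le_sqrt (by rw [hRsq]; exact hcore)
        _ = M * (s1 * s2) := Real.sqrt_sq hR0
    have hT : ‖α * c * B1‖ = ‖α‖ * (g 2 * g 1) := by
      rw [norm_mul, norm_mul, habsc]
      ring
    have hT_le : ‖α * c * B1‖ ≤ E + β := by
      calc ‖α * c * B1‖ = ‖(α * c * B1 - B12) + B12‖ := by ring_nf
        _ ≤ E + β := norm_add_le _ _
    have hmain : ‖α‖ * (g 1 * g 2) ≤ M * (s1 * s2) + β := by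
      rw [show g 1 * g 2 = g 2 * g 1 by ring, ← hT]
      linarith [hT_le, hE_le]
    have hlhs0 : 0 ≤ ‖α‖ * (g 1 * g 2) :=
      mul_nonneg (norm_nonneg α) (mul_nonneg (hg_nonneg 1) (hg_nonneg 2))
    have hsq := pow_le_pow_left₀ hlhs0 hmain 2
    have hβcs : β ^ 2 ≤ a 1 * a 2 := phi_cs φ hφ (x 1) (x 2)
    have hβle : β ≤ s1 * s2 := by
      have h12 : (s1 * s2) ^ 2 = a 1 * a 2 := by
        rw [show (s1 * s2) ^ 2 = s1 ^ 2 * s2 ^ 2 by ring, hs1sq, hs2sq]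
      have : β = Real.sqrt (β ^ 2) := (Real.sqrt_sq hβ0).symm
      rw [this]
      calc Real.sqrt (β ^ 2) ≤ Real.sqrt ((s1 * s2) ^ 2) :=
            Real.sqrt_le_sqrt (by rw [h12]; exact hβcs)
        _ = s1 * s2 := Real.sqrt_sq (mul_nonneg hs10 hs20)
    have hfξ : 0 ≤ f ξ := hf_nonneg ξ hξ
    have hfξ' : 0 ≤ f (1 - ξ) := hf_nonneg (1 - ξ) (hD ξ hξ)
    have hfsum : f ξ + f (1 - ξ) = 1 := hf ξ hξ
    have e0 : K * (g 1 * g 2) ^ 2 = (‖α‖ * (g 1 * g 2)) ^ 2 := by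
      rw [hKdef]; ring
    have eR : (M * (s1 * s2) + β) ^ 2
        = M ^ 2 * (a 1 * a 2) + 2 * (M * (s1 * s2) * β) + β ^ 2 := by
      rw [show (M * (s1 * s2) + β) ^ 2
          = M ^ 2 * (s1 ^ 2 * s2 ^ 2) + 2 * (M * (s1 * s2) * β) + β ^ 2 by ring,
        hs1sq, hs2sq]
    have hM2eq : M2 * (a 1 * a 2) = M ^ 2 * (a 1 * a 2) := by rw [hM2M]
    have hβsplit : β ^ 2 = f ξ * β ^ 2 + f (1 - ξ) * β ^ 2 := by
      linear_combination β ^ 2 * hfsum.symm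
    have h4 : f ξ * β ^ 2 ≤ f ξ * (s1 * s2 * β) := by
      apply mul_le_mul_of_nonneg_left _ hfξ
      calc β ^ 2 = β * β := sq β
        _ ≤ (s1 * s2) * β := mul_le_mul_of_nonneg_right hβle hβ0
    have hco : (f ξ + 2 * M) * (s1 * s2) * β
        = f ξ * (s1 * s2 * β) + 2 * (M * (s1 * s2) * β) := by ring
    rw [e0, hco]
    linarith [hsq, eR, hM2eq, hβsplit, h4]
  -- product bounds
  have hq_prod : q = ∏ i ∈ Finset.Icc 3 n, g i := by
    rw [hqdef, hQdef, norm_prod]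
  have hq_sq_le : q ^ 2 ≤ ∏ i ∈ Finset.Icc 3 n, a i := by
    rw [hq_prod, ← Finset.prod_pow]
    exact Finset.prod_le_prod (fun i _ => by positivity) (fun i _ => hgs i)
  have hq_le : q ≤ ∏ i ∈ Finset.Icc 3 n, Real.sqrt (a i) := by
    rw [hq_prod]
    refine Finset.prod_le_prod (fun i _ => hg_nonneg i) (fun i _ => ?_)
    have : g i = Real.sqrt (g i ^ 2) := (Real.sqrt_sq (hg_nonneg i)).symm
    rw [this]
    exact Real.sqrt_le_sqrt (hgs i)
  -- rewrite the goal products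
  have hLHS : ‖∏ i ∈ Finset.Icc 1 n, φ (inner A (x i) z)‖
      = g 1 * (g 2 * q) := by
    rw [prod_split hn, norm_mul, norm_mul, ← hQdef, ← hqdef]
  have hAprod : ∏ i ∈ Finset.Icc 1 n, (φ (inner A (x i) (x i))).re
      = a 1 * (a 2 * ∏ i ∈ Finset.Icc 3 n, a i) := prod_split hn a
  have hSprod : ∏ i ∈ Finset.Icc 1 n, Real.sqrt (φ (inner A (x i) (x i))).re
      = Real.sqrt (a 1) * (Real.sqrt (a 2) * ∏ i ∈ Finset.Icc 3 n, Real.sqrt (a i)) :=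
    prod_split hn (fun i => Real.sqrt (a i))
  have hβq : ‖φ (inner A (x 1) (x 2)) * Q‖ = β * q := by
    rw [norm_mul]
  rw [hLHS, hAprod, hSprod, hβq]
  -- final arithmetic
  set Pa : ℝ := ∏ i ∈ Finset.Icc 3 n, a i with hPa
  set Ps : ℝ := ∏ i ∈ Finset.Icc 3 n, Real.sqrt (a i) with hPs
  have hPa0 : 0 ≤ Pa := Finset.prod_nonneg (fun i _ => ha_nonneg i)
  have hPs0 : 0 ≤ Ps := Finset.prod_nonneg (fun i _ => Real.sqrt_nonneg _)
  have hfξ : 0 ≤ f ξ := hf_nonneg ξ hξ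
  have hfξ' : 0 ≤ f (1 - ξ) := hf_nonneg (1 - ξ) (hD ξ hξ)
  have hM20 : 0 ≤ M2 := le_trans zero_le_one (le_max_left _ _)
  have hs10 : 0 ≤ Real.sqrt (a 1) := Real.sqrt_nonneg _
  have hs20 : 0 ≤ Real.sqrt (a 2) := Real.sqrt_nonneg _
  have hmul := mul_le_mul_of_nonneg_right core2 (by positivity : (0:ℝ) ≤ q ^ 2)
  have h2M0 : (0:ℝ) ≤ f ξ + 2 * M := by linarith
  have hterm1 : M2 * (a 1 * a 2) * q ^ 2 ≤ M2 * (a 1 * (a 2 * Pa)) := by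
    calc M2 * (a 1 * a 2) * q ^ 2 = (M2 * (a 1 * a 2)) * q ^ 2 := by ring
      _ ≤ (M2 * (a 1 * a 2)) * Pa := by
          apply mul_le_mul_of_nonneg_left hq_sq_le
          exact mul_nonneg hM20 (mul_nonneg (ha_nonneg 1) (ha_nonneg 2))
      _ = M2 * (a 1 * (a 2 * Pa)) := by ring
  have hterm3 : (f ξ + 2 * M) * (Real.sqrt (a 1) * Real.sqrt (a 2)) * β * q ^ 2
      ≤ (f ξ + 2 * M) * (Real.sqrt (a 1) * (Real.sqrt (a 2) * Ps)) * (β * q) := by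
    have hco0 : 0 ≤ (f ξ + 2 * M) * (Real.sqrt (a 1) * Real.sqrt (a 2)) * β * q :=
      mul_nonneg (mul_nonneg (mul_nonneg h2M0 (mul_nonneg hs10 hs20)) hβ0) hq0
    calc (f ξ + 2 * M) * (Real.sqrt (a 1) * Real.sqrt (a 2)) * β * q ^ 2
        = ((f ξ + 2 * M) * (Real.sqrt (a 1) * Real.sqrt (a 2)) * β * q) * q := by ring
      _ ≤ ((f ξ + 2 * M) * (Real.sqrt (a 1) * Real.sqrt (a 2)) * β * q) * Ps :=
          mul_le_mul_of_nonneg_left hq_le hco0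
      _ = (f ξ + 2 * M) * (Real.sqrt (a 1) * (Real.sqrt (a 2) * Ps)) * (β * q) := by ring
  have hmain : K * ((g 1 * (g 2 * q)) ^ 2)
      ≤ M2 * (a 1 * (a 2 * Pa)) + f (1 - ξ) * (β * q) ^ 2
        + (f ξ + 2 * M) * (Real.sqrt (a 1) * (Real.sqrt (a 2) * Ps)) * (β * q) := by
    have e1 : K * ((g 1 * (g 2 * q)) ^ 2) = K * (g 1 * g 2) ^ 2 * q ^ 2 := by ring
    have e2 : f (1 - ξ) * β ^ 2 * q ^ 2 = f (1 - ξ) * (β * q) ^ 2 := by ring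
    rw [e1]
    calc K * (g 1 * g 2) ^ 2 * q ^ 2
        ≤ (M2 * (a 1 * a 2) + f (1 - ξ) * β ^ 2
            + (f ξ + 2 * M) * (Real.sqrt (a 1) * Real.sqrt (a 2)) * β) * q ^ 2 := hmul
      _ = M2 * (a 1 * a 2) * q ^ 2 + f (1 - ξ) * (β * q) ^ 2
            + (f ξ + 2 * M) * (Real.sqrt (a 1) * Real.sqrt (a 2)) * β * q ^ 2 := by ring
      _ ≤ _ := by linarith [hterm1, hterm3]
  have hRHSeq : M2 / K * (a 1 * (a 2 * Pa)) + f (1 - ξ) / K * (β * q) ^ 2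
      + (f ξ + 2 * M) / K * (Real.sqrt (a 1) * (Real.sqrt (a 2) * Ps)) * (β * q)
      = (M2 * (a 1 * (a 2 * Pa)) + f (1 - ξ) * (β * q) ^ 2
          + (f ξ + 2 * M) * (Real.sqrt (a 1) * (Real.sqrt (a 2) * Ps)) * (β * q)) / K := by
    field_simp
  rw [hRHSeq, le_div_iff₀ hK]
  linarith [hmain]
end

section
/- Let X be a pre-Hilbert module over a C*-algebra A and φ a positive linear functional on A. If n ≥ 2 and x₁,…,xₙ, z ∈ X satisfy φ(|z|²)=1, then for every nonzero complex number α: |∏_{i=1}^{n} φ(⟨x_i,z⟩)| ≤ (1/|α|)·( max{1,|α−1|}·∏_{i=1}^{n} √(φ(|x_i|²)) + |φ(⟨x₁,x₂⟩)·∏_{i=3}^{n} φ(⟨x_i,z⟩)| ). -/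
open scoped ComplexOrder ComplexStarModule

/-- The Mathlib (December 2024) notion of a pre-Hilbert `C*`-module: a *right* module, with the
action given by `SMul Aᵐᵒᵖ E`. Mathlib's current `CStarModule` is a left-module notion. -/
class CStarModuleRight (A E : Type*) [NonUnitalSemiring A] [StarRing A] [Module ℂ A]
    [AddCommGroup E] [Module ℂ E] [PartialOrder A] [SMul Aᵐᵒᵖ E] [Norm A] [Norm E]
    extends Inner A E where
  inner_add_right {x} {y} {z} : inner x (y + z) = inner x y + inner x z
  inner_self_nonneg {x} : 0 ≤ inner x x
  inner_self {x} : inner x x = 0 ↔ x = 0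
  inner_op_smul_right {a : A} {x y : E} : inner x (MulOpposite.op a • y) = inner x y * a
  inner_smul_right_complex {z : ℂ} {x} {y} : inner x (z • y) = z • inner x y
  star_inner x y : star (inner x y) = inner y x
  norm_eq_sqrt_norm_inner_self x : ‖x‖ = √‖inner x x‖

section Aux

variable {A : Type*} [NonUnitalCStarAlgebra A] [PartialOrder A] [StarOrderedRing A]

lemma phi_im_eq_zero (φ : A →ₗ[ℂ] ℂ) (hφ : ∀ b : A, 0 ≤ b → 0 ≤ φ b)
    (a : A) (ha : IsSelfAdjoint a) : (φ a).im = 0 := by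
  have h1 := hφ _ (CFC.posPart_nonneg a)
  have h2 := hφ _ (CFC.negPart_nonneg a)
  have h3 : a = a⁺ - a⁻ := (CFC.posPart_sub_negPart a ha).symm
  rw [Complex.nonneg_iff] at h1 h2
  rw [h3, map_sub]
  simp [← h1.2, ← h2.2]

lemma phi_star (φ : A →ₗ[ℂ] ℂ) (hφ : ∀ b : A, 0 ≤ b → 0 ≤ φ b)
    (a : A) : φ (star a) = (starRingEnd ℂ) (φ a) := by
  have hre := phi_im_eq_zero φ hφ (ℜ a : A) (ℜ a).2
  have him := phi_im_eq_zero φ hφ (ℑ a : A) (ℑ a).2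
  have ha : a = (ℜ a : A) + Complex.I • (ℑ a : A) :=
    (realPart_add_I_smul_imaginaryPart a).symm
  have hsa : star a = (ℜ a : A) - Complex.I • (ℑ a : A) := by
    nth_rw 1 [ha]
    rw [star_add, star_smul]
    simp [(ℜ a).2.star_eq, (ℑ a).2.star_eq, Complex.star_def, Complex.conj_I,
      sub_eq_add_neg, neg_smul]
  have hφa : φ a = φ (ℜ a : A) + Complex.I * φ (ℑ a : A) := by
    nth_rw 1 [ha]; simp only [map_add, map_smul, smul_eq_mul]
  rw [hsa, hφa]
  simp only [map_sub, smul_eq_mul, map_smul]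
  apply Complex.ext <;>
    simp [hre, him, Complex.add_re, Complex.mul_re, Complex.mul_im]

lemma prod_Icc_split {M : Type*} [CommMonoid M] (g : ℕ → M) {n : ℕ} (hn : 2 ≤ n) :
    ∏ i ∈ Finset.Icc 1 n, g i = g 1 * (g 2 * ∏ i ∈ Finset.Icc 3 n, g i) := by
  rw [← Finset.Ico_add_one_right_eq_Icc, Finset.prod_eq_prod_Ico_succ_bot (by omega),
    Finset.prod_eq_prod_Ico_succ_bot (by omega), Finset.Ico_add_one_right_eq_Icc]

end Aux

section AuxR

variable {A E : Type*} [NonUnitalCStarAlgebra A] [PartialOrder A] [StarOrderedRing A]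
  [AddCommGroup E] [Module ℂ E] [SMul Aᵐᵒᵖ E] [Norm E] [CStarModuleRight A E]

lemma cmr_sub_right (x y z : E) : inner A x (y - z) = inner A x y - inner A x z := by
  rw [eq_sub_iff_add_eq, ← CStarModuleRight.inner_add_right, sub_add_cancel]

lemma cmr_sub_left (x y z : E) : inner A (y - z) x = inner A y x - inner A z x := by
  rw [← CStarModuleRight.star_inner x (y - z), cmr_sub_right, star_sub,
    CStarModuleRight.star_inner, CStarModuleRight.star_inner]

lemma cmr_add_left (x y z : E) : inner A (y + z) x = inner A y x + inner A z x := by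
  rw [← CStarModuleRight.star_inner x (y + z), CStarModuleRight.inner_add_right, star_add,
    CStarModuleRight.star_inner, CStarModuleRight.star_inner]

lemma cmr_smul_left (a : ℂ) (x y : E) : inner A (a • x) y = star a • inner A x y := by
  rw [← CStarModuleRight.star_inner y (a • x), CStarModuleRight.inner_smul_right_complex,
    star_smul, CStarModuleRight.star_inner]

end AuxR

/-- Corollary 2.2, inequality (2.1): a Buzano-type inequality in
pre-Hilbert `C*`-modules, for an arbitrary nonzero `α`. -/
theorem buzano_corollary_alpha
    {A X : Type*} [NonUnitalCStarAlgebra A] [PartialOrder A] [StarOrderedRing A]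
    [AddCommGroup X] [Module ℂ X] [SMul Aᵐᵒᵖ X] [Norm X] [CStarModuleRight A X]
    (φ : A →ₗ[ℂ] ℂ) (hφ : ∀ b : A, 0 ≤ b → 0 ≤ φ b)
    (n : ℕ) (hn : 2 ≤ n) (x : ℕ → X) (z : X)
    (hz : φ (inner A z z : A) = 1)
    (α : ℂ) (hα : α ≠ 0) :
    ‖∏ i ∈ Finset.Icc 1 n, φ (inner A (x i) z : A)‖ ≤
      (1 / ‖α‖) *
        (max 1 ‖α - 1‖ *
            ∏ i ∈ Finset.Icc 1 n, Real.sqrt (φ (inner A (x i) (x i) : A)).re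
          + ‖φ (inner A (x 1) (x 2) : A) *
              ∏ i ∈ Finset.Icc 3 n, φ (inner A (x i) z : A)‖) := by
  classical
  set f : X → X → ℂ := fun u v => φ (inner A u v : A) with hf
  have hsym : ∀ u v : X, f v u = (starRingEnd ℂ) (f u v) := by
    intro u v
    rw [hf]; dsimp only
    rw [← CStarModuleRight.star_inner, phi_star φ hφ]
  -- basic sesquilinearity
  have fsubl : ∀ u v w : X, f (u - v) w = f u w - f v w := by
    intro u v w; simp [hf, cmr_sub_left]
  have fsubr : ∀ u v w : X, f u (v - w) = f u v - f u w := by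
    intro u v w; simp [hf, cmr_sub_right]
  have fsmull : ∀ (a : ℂ) (u v : X), f (a • u) v = (starRingEnd ℂ) a * f u v := by
    intro a u v; simp [hf, cmr_smul_left, Complex.star_def]
  have fsmulr : ∀ (a : ℂ) (u v : X), f u (a • v) = a * f u v := by
    intro a u v; simp [hf, CStarModuleRight.inner_smul_right_complex]
  have hrenn : ∀ u : X, 0 ≤ (f u u).re := by
    intro u
    have := hφ _ (CStarModuleRight.inner_self_nonneg (x := u))
    exact (Complex.nonneg_iff.mp this).1
  -- the core
  let C : PreInnerProductSpace.Core ℂ X :=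
  { inner := f
    conj_inner_symm := fun u v => by
      simp only [hsym u v, Complex.conj_conj]
    re_inner_nonneg := fun u => hrenn u
    add_left := fun u v w => by simp [hf, cmr_add_left]
    smul_left := fun u v r => fsmull r u v }
  -- Cauchy–Schwarz
  have habs : ∀ u v : X,
      ‖f u v‖ ≤ Real.sqrt (f u u).re * Real.sqrt (f v v).re := by
    intro u v
    have h : ‖f u v‖ * ‖f v u‖ ≤ (f u u).re * (f v v).re :=
      InnerProductSpace.Core.inner_mul_inner_self_le (𝕜 := ℂ) (c := C) u v
    have h' : ‖f u v‖ * ‖f u v‖ ≤ (f u u).re * (f v v).re := by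
      have e1 : ‖f v u‖ = ‖f u v‖ := by
        rw [hsym u v]; exact Complex.norm_conj _
      rwa [e1] at h
    calc ‖f u v‖ = Real.sqrt (‖f u v‖ * ‖f u v‖) :=
          (Real.sqrt_mul_self (norm_nonneg _)).symm
      _ ≤ Real.sqrt ((f u u).re * (f v v).re) := Real.sqrt_le_sqrt h'
      _ = Real.sqrt (f u u).re * Real.sqrt (f v v).re :=
          Real.sqrt_mul (hrenn u) _
  set r : ℕ → ℝ := fun i => Real.sqrt (f (x i) (x i)).re with hr
  have hrnn : ∀ i, 0 ≤ r i := fun i => Real.sqrt_nonneg _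
  have hfzz : f z z = 1 := hz
  have hzre : (f z z).re = 1 := by rw [hfzz]; simp
  have habsz : ∀ i : ℕ, ‖f (x i) z‖ ≤ r i := by
    intro i
    have := habs (x i) z
    simpa [hzre] using this
  set M : ℝ := max 1 ‖α - 1‖ with hM
  have hM1 : (1 : ℝ) ≤ M := le_max_left _ _
  have hMa : ‖α - 1‖ ≤ M := le_max_right _ _
  -- Buzano step
  set c : ℂ := (starRingEnd ℂ) (f (x 2) z) with hc
  set s : ℂ := α * c with hs
  set u : X := s • z - x 2 with hu
  have hu1 : f (x 1) u = s * f (x 1) z - f (x 1) (x 2) := by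
    rw [hu, fsubr, fsmulr]
  have hzx2 : f z (x 2) = c := hsym (x 2) z
  have hx2z : f (x 2) z = (starRingEnd ℂ) c := by
    rw [hsym z (x 2), hzx2]
  have huu : f u u = (starRingEnd ℂ) s * s - (starRingEnd ℂ) s * c
      - s * (starRingEnd ℂ) c + f (x 2) (x 2) := by
    simp only [hu, fsubl, fsubr, fsmull, fsmulr, hfzz, hzx2, hx2z]
    ring
  have hreuu : (f u u).re = Complex.normSq α * Complex.normSq c
      - 2 * α.re * Complex.normSq c + (f (x 2) (x 2)).re := by
    rw [huu, hs]
    simp [Complex.normSq_apply, Complex.add_re, Complex.sub_re, Complex.mul_re,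
      Complex.mul_im, Complex.conj_re, Complex.conj_im]
    ring
  have hα1 : Complex.normSq (α - 1) = Complex.normSq α - 2 * α.re + 1 := by
    simp [Complex.normSq_apply, Complex.sub_re, Complex.sub_im]
    ring
  have hM2 : Complex.normSq (α - 1) ≤ M ^ 2 := by
    rw [← Complex.sq_norm]
    exact pow_le_pow_left₀ (norm_nonneg _) hMa 2
  have hc2 : Complex.normSq c ≤ (f (x 2) (x 2)).re := by
    have h1 : ‖c‖ ≤ r 2 := by
      rw [hc, Complex.norm_conj]; exact habsz 2
    have h2 : Complex.normSq c ≤ (r 2) ^ 2 := by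
      rw [← Complex.sq_norm]
      exact pow_le_pow_left₀ (norm_nonneg _) h1 2
    rwa [hr, Real.sq_sqrt (hrenn _)] at h2
  have hfuu_le : (f u u).re ≤ M ^ 2 * (f (x 2) (x 2)).re := by
    have hcnn : 0 ≤ Complex.normSq c := Complex.normSq_nonneg c
    have hM1' : (1 : ℝ) ≤ M ^ 2 := by nlinarith
    have h1 : 0 ≤ ((f (x 2) (x 2)).re - Complex.normSq c) * (M ^ 2 - 1) :=
      mul_nonneg (sub_nonneg.mpr hc2) (sub_nonneg.mpr hM1')
    have h2 : 0 ≤ Complex.normSq c * (M ^ 2 - Complex.normSq (α - 1)) :=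
      mul_nonneg hcnn (sub_nonneg.mpr hM2)
    calc (f u u).re = Complex.normSq c * Complex.normSq (α - 1) - Complex.normSq c
          + (f (x 2) (x 2)).re := by rw [hreuu, hα1]; ring
      _ ≤ M ^ 2 * (f (x 2) (x 2)).re := by nlinarith [h1, h2]
  have hsqrtuu : Real.sqrt (f u u).re ≤ M * r 2 := by
    have h1 : (f u u).re ≤ (M * r 2) ^ 2 := by
      rw [mul_pow, hr, Real.sq_sqrt (hrenn _)]
      exact hfuu_le
    calc Real.sqrt (f u u).re ≤ Real.sqrt ((M * r 2) ^ 2) := Real.sqrt_le_sqrt h1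
      _ = M * r 2 := Real.sqrt_sq (by positivity)
  have hA : ‖α‖ * (‖f (x 1) z‖ * ‖f (x 2) z‖) ≤
      M * (r 1 * r 2) + ‖f (x 1) (x 2)‖ := by
    have e1 : ‖α‖ * (‖f (x 1) z‖ * ‖f (x 2) z‖)
        = ‖s * f (x 1) z‖ := by
      rw [norm_mul, hs, norm_mul, hc, Complex.norm_conj]; ring
    have e2 : s * f (x 1) z = f (x 1) u + f (x 1) (x 2) := by rw [hu1]; ring
    rw [e1, e2]
    calc ‖f (x 1) u + f (x 1) (x 2)‖
        ≤ ‖f (x 1) u‖ + ‖f (x 1) (x 2)‖ := norm_add_le _ _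
      _ ≤ r 1 * Real.sqrt (f u u).re + ‖f (x 1) (x 2)‖ := by
          have := habs (x 1) u; exact add_le_add_left this _
      _ ≤ r 1 * (M * r 2) + ‖f (x 1) (x 2)‖ := by
          have := mul_le_mul_of_nonneg_left hsqrtuu (hrnn 1)
          exact add_le_add_left this _
      _ = M * (r 1 * r 2) + ‖f (x 1) (x 2)‖ := by ring
  -- assemble
  set P3 : ℂ := ∏ i ∈ Finset.Icc 3 n, f (x i) z with hP3def
  set R3 : ℝ := ∏ i ∈ Finset.Icc 3 n, r i with hR3def
  have hR3nn : 0 ≤ R3 := Finset.prod_nonneg fun i _ => hrnn i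
  have hP3 : ‖P3‖ ≤ R3 := by
    rw [hP3def, norm_prod]
    exact Finset.prod_le_prod (fun i _ => norm_nonneg _) (fun i _ => habsz i)
  have hsplitf := prod_Icc_split (fun i => f (x i) z) hn
  have hsplitr := prod_Icc_split r hn
  have hαpos : 0 < ‖α‖ := norm_pos_iff.mpr hα
  show ‖∏ i ∈ Finset.Icc 1 n, f (x i) z‖ ≤
      (1 / ‖α‖) * (M * ∏ i ∈ Finset.Icc 1 n, r i
        + ‖f (x 1) (x 2) * P3‖)
  rw [hsplitf, hsplitr, one_div, inv_mul_eq_div, le_div_iff₀ hαpos]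
  calc ‖f (x 1) z * (f (x 2) z * P3)‖ * ‖α‖
      = ‖α‖ * (‖f (x 1) z‖ * ‖f (x 2) z‖)
        * ‖P3‖ := by rw [norm_mul, norm_mul]; ring
    _ ≤ (M * (r 1 * r 2) + ‖f (x 1) (x 2)‖) * ‖P3‖ :=
        mul_le_mul_of_nonneg_right hA (norm_nonneg _)
    _ = M * (r 1 * r 2) * ‖P3‖
        + ‖f (x 1) (x 2)‖ * ‖P3‖ := by ring
    _ ≤ M * (r 1 * (r 2 * R3)) + ‖f (x 1) (x 2) * P3‖ := by
        refine add_le_add ?_ ?_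
        · have h1 : M * (r 1 * r 2) * ‖P3‖ ≤ M * (r 1 * r 2) * R3 :=
            mul_le_mul_of_nonneg_left hP3 (by positivity)
          calc M * (r 1 * r 2) * ‖P3‖ ≤ M * (r 1 * r 2) * R3 := h1
            _ = M * (r 1 * (r 2 * R3)) := by ring
        · rw [norm_mul]
end

section
/- Let H be a complex inner product space with inner product [·,·]. If n ≥ 2 and x₁,…,xₙ, z ∈ H satisfy ‖z‖ = 1, then |∏_{i=1}^{n} [x_i,z]| ≤ (1/2)·( ∏_{i=1}^{n} ‖x_i‖ + |[x₁,x₂]·∏_{i=3}^{n} [x_i,z]| ). -/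
open Complex

lemma buzano_aux {H : Type*} [NormedAddCommGroup H] [InnerProductSpace ℂ H]
    (x y z : H) (hz : ‖z‖ = 1) :
    ‖(inner ℂ x z : ℂ) * (inner ℂ y z : ℂ)‖ ≤
      (‖x‖ * ‖y‖ + ‖(inner ℂ x y : ℂ)‖) / 2 := by
  set c : ℂ := inner ℂ z y with hc
  set w : H := (2 * c) • z - y with hw
  have hnormw : ‖w‖ = ‖y‖ := by
    have h1 : ‖w‖ ^ 2 = ‖y‖ ^ 2 := by
      rw [hw, @norm_sub_sq ℂ]
      rw [inner_smul_left, ← hc, norm_smul]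
      have h2 : (starRingEnd ℂ) (2 * c) * c = ((2 * (‖c‖)^2 : ℝ) : ℂ) := by
        rw [map_mul, mul_assoc]
        have hcc : (starRingEnd ℂ) c * c = ((‖c‖ ^ 2 : ℝ) : ℂ) := by
          rw [mul_comm, Complex.mul_conj, Complex.sq_norm]
        rw [hcc]
        have h2' : (starRingEnd ℂ) 2 = 2 := by
          rw [Complex.ext_iff]; simp
        rw [h2']
        push_cast
        ring
      rw [h2]
      have h3 : RCLike.re (((2 * (‖c‖)^2 : ℝ) : ℂ)) = 2 * (‖c‖)^2 :=
        Complex.ofReal_re _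
      rw [h3]
      have h4 : ‖(2 * c : ℂ)‖ = 2 * ‖c‖ := by
        simp
      rw [h4, hz]
      ring
    have hle : ‖w‖ ≤ ‖y‖ := by nlinarith [norm_nonneg w, norm_nonneg y]
    have hge : ‖y‖ ≤ ‖w‖ := by nlinarith [norm_nonneg w, norm_nonneg y]
    linarith
  have hkey : (inner ℂ x z : ℂ) * c = ((inner ℂ x w : ℂ) + inner ℂ x y) / 2 := by
    rw [hw, inner_sub_right, inner_smul_right]
    ring
  have h1 : ‖(inner ℂ x z : ℂ) * (inner ℂ y z : ℂ)‖ =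
      ‖(inner ℂ x z : ℂ) * c‖ := by
    rw [norm_mul, norm_mul]
    congr 1
    rw [hc, ← inner_conj_symm z y]
    exact (Complex.norm_conj _).symm
  rw [h1, hkey]
  calc ‖((inner ℂ x w : ℂ) + inner ℂ x y) / 2‖
      ≤ (‖(inner ℂ x w : ℂ)‖ + ‖(inner ℂ x y : ℂ)‖) / 2 := by
        rw [norm_div]
        simp only [Complex.norm_ofNat]
        gcongr
        exact norm_add_le _ _
    _ ≤ (‖x‖ * ‖y‖ + ‖(inner ℂ x y : ℂ)‖) / 2 := by
        gcongr
        calc ‖(inner ℂ x w : ℂ)‖ = ‖(inner ℂ x w : ℂ)‖ := rfl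
          _ ≤ ‖x‖ * ‖w‖ := norm_inner_le_norm x w
          _ = ‖x‖ * ‖y‖ := by rw [hnormw]

/-- Remark 2.3: extension of the classical Buzano inequality in a
complex inner product space. -/
theorem buzano_inner_product_space
    {H : Type*} [NormedAddCommGroup H] [InnerProductSpace ℂ H]
    (n : ℕ) (hn : 2 ≤ n) (x : ℕ → H) (z : H) (hz : ‖z‖ = 1) :
    ‖∏ i ∈ Finset.Icc 1 n, (inner ℂ (x i) z : ℂ)‖ ≤
      (1 / 2) *
        ((∏ i ∈ Finset.Icc 1 n, ‖x i‖)
          + ‖(inner ℂ (x 1) (x 2) : ℂ) *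
              ∏ i ∈ Finset.Icc 3 n, (inner ℂ (x i) z : ℂ)‖) := by
  have hset : Finset.Icc 1 n = insert 1 (insert 2 (Finset.Icc 3 n)) := by
    ext i
    simp [Finset.mem_Icc, Finset.mem_insert]
    omega
  have h1 : (1:ℕ) ∉ insert 2 (Finset.Icc 3 n) := by simp [Finset.mem_Icc]
  have h2 : (2:ℕ) ∉ Finset.Icc 3 n := by simp [Finset.mem_Icc]
  have hprodf : ∀ (f : ℕ → ℂ), ∏ i ∈ Finset.Icc 1 n, f i
      = f 1 * (f 2 * ∏ i ∈ Finset.Icc 3 n, f i) := by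
    intro f
    rw [hset, Finset.prod_insert h1, Finset.prod_insert h2]
  have hprodn : ∏ i ∈ Finset.Icc 1 n, ‖x i‖
      = ‖x 1‖ * (‖x 2‖ * ∏ i ∈ Finset.Icc 3 n, ‖x i‖) := by
    rw [hset, Finset.prod_insert h1, Finset.prod_insert h2]
  set P : ℂ := ∏ i ∈ Finset.Icc 3 n, (inner ℂ (x i) z : ℂ) with hP
  have hPle : ‖P‖ ≤ ∏ i ∈ Finset.Icc 3 n, ‖x i‖ := by
    rw [hP]
    calc ‖∏ i ∈ Finset.Icc 3 n, (inner ℂ (x i) z : ℂ)‖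
        = ∏ i ∈ Finset.Icc 3 n, ‖(inner ℂ (x i) z : ℂ)‖ := norm_prod _ _
      _ ≤ ∏ i ∈ Finset.Icc 3 n, ‖x i‖ := by
          apply Finset.prod_le_prod
          · intro i _; exact norm_nonneg _
          · intro i _
            calc ‖(inner ℂ (x i) z : ℂ)‖ = ‖(inner ℂ (x i) z : ℂ)‖ := rfl
              _ ≤ ‖x i‖ * ‖z‖ := norm_inner_le_norm _ _
              _ = ‖x i‖ := by rw [hz, mul_one]
  have hbuz := buzano_aux (x 1) (x 2) z hz
  rw [hprodf, hprodn]
  rw [← mul_assoc, norm_mul]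
  have hPnn : (0:ℝ) ≤ ‖P‖ := norm_nonneg _
  calc ‖(inner ℂ (x 1) z : ℂ) * (inner ℂ (x 2) z : ℂ)‖ * ‖P‖
      ≤ ((‖x 1‖ * ‖x 2‖ + ‖(inner ℂ (x 1) (x 2) : ℂ)‖) / 2) * ‖P‖ := by
        gcongr
    _ ≤ 1 / 2 * (‖x 1‖ * (‖x 2‖ * ∏ i ∈ Finset.Icc 3 n, ‖x i‖)
          + ‖(inner ℂ (x 1) (x 2) : ℂ) * P‖) := by
        rw [norm_mul]
        have hn1 : (0:ℝ) ≤ ‖x 1‖ * ‖x 2‖ := by positivity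
        nlinarith [norm_nonneg (inner ℂ (x 1) (x 2) : ℂ)]
end

section
/- Let A be a unital C*-algebra, a ∈ A, φ a state on A, and n an integer with n ≥ 2. Then |φ(a)|ⁿ ≤ Σ_{i=1}^{n−1} (1/2ⁱ)·√(φ((aⁱ)* aⁱ))·(φ(a a*))^{(n−i)/2} + (1/2^{n−1})·|φ(aⁿ)|. -/
open scoped ComplexOrder

/-- A state on a unital `C*`-algebra: a positive linear functional `φ` (equivalently, since the
algebra is complete, `φ (star b * b) ≥ 0` for all `b`) with `φ 1 = 1`. -/
def IsState {A : Type*} [CStarAlgebra A] (φ : A →ₗ[ℂ] ℂ) : Prop :=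
  (∀ b : A, 0 ≤ φ (star b * b)) ∧ φ 1 = 1

/-- The numerical radius of an element of a unital `C*`-algebra:
`v(a) = sup { |φ(a)| : φ a state on A }`. -/
noncomputable def numRadius {A : Type*} [CStarAlgebra A] (a : A) : ℝ :=
  sSup {r : ℝ | ∃ φ : A →ₗ[ℂ] ℂ, IsState φ ∧ r = ‖φ a‖}

section Helpers

variable {A : Type*} [CStarAlgebra A] {φ : A →ₗ[ℂ] ℂ}

lemma imz (hφ : IsState φ) (b : A) : (φ (star b * b)).im = 0 := by
  have := hφ.1 b
  rw [Complex.le_def] at this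
  simpa using this.2.symm

lemma renn (hφ : IsState φ) (b : A) : 0 ≤ (φ (star b * b)).re := by
  have := hφ.1 b
  rw [Complex.le_def] at this
  simpa using this.1

lemma herm (hφ : IsState φ) (x : A) : φ (star x) = starRingEnd ℂ (φ x) := by
  have e1 : star (1 + x) * (1 + x) = 1 + x + star x + star x * x := by
    simp [star_add, add_mul, mul_add]; abel
  have e2 : star (1 + Complex.I • x) * (1 + Complex.I • x)
      = 1 + Complex.I • x + (-Complex.I) • star x + star x * x := by
    simp [star_add, star_smul, Complex.conj_I, add_mul, mul_add, smul_mul_assoc,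
      mul_smul_comm, smul_smul, Complex.I_mul_I]
    abel
  have h1 := imz hφ (1 + x)
  have h2 := imz hφ (1 + Complex.I • x)
  have hx := imz hφ x
  rw [e1] at h1
  rw [e2] at h2
  simp [map_add, map_smul, hφ.2, Complex.add_im, Complex.mul_im] at h1 h2
  apply Complex.ext <;> simp at h1 h2 ⊢ <;> linarith

lemma hsym (hφ : IsState φ) (x y : A) :
    φ (star y * x) = starRingEnd ℂ (φ (star x * y)) := by
  have := herm hφ (star x * y)
  simpa [star_mul] using this

lemma expand (lam : ℂ) (x y : A) :
    φ (star (lam • x + y) * (lam • x + y)) =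
      starRingEnd ℂ lam * lam * φ (star x * x) + starRingEnd ℂ lam * φ (star x * y)
        + lam * φ (star y * x) + φ (star y * y) := by
  have h : star (lam • x + y) * (lam • x + y)
      = (starRingEnd ℂ lam * lam) • (star x * x) + starRingEnd ℂ lam • (star x * y)
        + lam • (star y * x) + star y * y := by
    simp [star_add, star_smul, add_mul, mul_add, smul_mul_assoc, mul_smul_comm, smul_smul]
    rw [mul_comm lam (starRingEnd ℂ lam)]
    abel
  rw [h]
  simp [map_add, map_smul, smul_eq_mul]

lemma cs (hφ : IsState φ) (x y : A) :
    ‖φ (star x * y)‖ ^ 2 ≤ (φ (star x * x)).re * (φ (star y * y)).re := by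
  by_cases hB0 : φ (star x * y) = 0
  · simp [hB0]
    exact mul_nonneg (renn hφ x) (renn hφ y)
  have key : ∀ t : ℝ, 0 ≤ (Complex.normSq (φ (star x * y)) * (φ (star x * x)).re) * (t * t)
      + (2 * Complex.normSq (φ (star x * y))) * t + (φ (star y * y)).re := by
    intro t
    have e : φ (star (((t:ℂ) * φ (star x * y)) • x + y) * ((((t:ℂ) * φ (star x * y))) • x + y))
        = ((t * t * Complex.normSq (φ (star x * y)) : ℝ) : ℂ) * φ (star x * x)
          + ((t * Complex.normSq (φ (star x * y)) : ℝ) : ℂ)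
          + ((t * Complex.normSq (φ (star x * y)) : ℝ) : ℂ) + φ (star y * y) := by
      rw [expand, hsym hφ x y]
      apply Complex.ext <;>
        simp [Complex.normSq_apply, Complex.mul_re, Complex.mul_im] <;> ring
    have h0 : (0:ℝ) ≤ (((t * t * Complex.normSq (φ (star x * y)) : ℝ) : ℂ) * φ (star x * x)
          + ((t * Complex.normSq (φ (star x * y)) : ℝ) : ℂ)
          + ((t * Complex.normSq (φ (star x * y)) : ℝ) : ℂ) + φ (star y * y)).re := by
      rw [← e]; exact renn hφ _
    simp [Complex.add_re, Complex.mul_re, imz hφ x, imz hφ y] at h0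
    nlinarith [h0]
  have hd := discrim_le_zero key
  rw [discrim] at hd
  have hnsq : 0 < Complex.normSq (φ (star x * y)) := Complex.normSq_pos.2 hB0
  have habs : ‖φ (star x * y)‖ ^ 2 = Complex.normSq (φ (star x * y)) :=
    Complex.sq_norm _
  nlinarith [hd, hnsq]

lemma buzano (hφ : IsState φ) (x y : A) :
    2 * ‖φ (star x) * φ y‖ ≤
      Real.sqrt ((φ (star x * x)).re) * Real.sqrt ((φ (star y * y)).re)
        + ‖φ (star x * y)‖ := by
  set T : A := (2 * φ y) • 1 - y with hT
  have h1 : φ (star x * T) = 2 * (φ (star x) * φ y) - φ (star x * y) := by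
    rw [hT]
    simp [mul_sub, mul_smul_comm, map_sub, map_smul, smul_eq_mul]
    ring
  have h2 : φ (star T * T) = φ (star y * y) := by
    rw [hT]
    have e : star ((2 * φ y) • 1 - y) * ((2 * φ y) • 1 - y)
        = (starRingEnd ℂ (2 * φ y) * (2 * φ y)) • (1:A) - (starRingEnd ℂ (2 * φ y)) • y
          - (2 * φ y) • star y + star y * y := by
      simp [star_sub, star_smul, sub_mul, mul_sub, smul_mul_assoc, mul_smul_comm, smul_smul, map_mul, Complex.conj_ofNat]
      module
    rw [e]
    simp [map_sub, map_add, map_smul, smul_eq_mul, hφ.2, herm hφ y, map_ofNat]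
    apply Complex.ext <;> simp [Complex.mul_re, Complex.mul_im, Complex.sub_re,
      Complex.sub_im, Complex.conj_re, Complex.conj_im] <;> ring
  have h3 := cs hφ x T
  rw [h1, h2] at h3
  have habsD : ‖2 * (φ (star x) * φ y) - φ (star x * y)‖ ≤
      Real.sqrt ((φ (star x * x)).re) * Real.sqrt ((φ (star y * y)).re) := by
    rw [← Real.sqrt_mul (renn hφ x)]
    exact Real.le_sqrt_of_sq_le h3
  have key : (2 : ℂ) * (φ (star x) * φ y)
      = (2 * (φ (star x) * φ y) - φ (star x * y)) + φ (star x * y) := by ring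
  calc 2 * ‖φ (star x) * φ y‖
      = ‖(2:ℂ) * (φ (star x) * φ y)‖ := by rw [norm_mul]; simp
    _ = ‖(2 * (φ (star x) * φ y) - φ (star x * y)) + φ (star x * y)‖ := by
        rw [← key]
    _ ≤ ‖2 * (φ (star x) * φ y) - φ (star x * y)‖
          + ‖φ (star x * y)‖ := norm_add_le _ _
    _ ≤ _ := by linarith

lemma sqrt_pow'' {x : ℝ} (hx : 0 ≤ x) (k : ℕ) : Real.sqrt (x ^ k) = Real.sqrt x ^ k := by
  induction k with
  | zero => simp
  | succ k ih => rw [pow_succ, pow_succ, Real.sqrt_mul (pow_nonneg hx k), ih]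

lemma keystep (hφ : IsState φ) (a : A) (m : ℕ) :
    2 * (‖φ a‖ * ‖φ (a ^ m)‖) ≤
      Real.sqrt ((φ (star (a ^ m) * a ^ m)).re) * Real.sqrt ((φ (a * star a)).re)
        + ‖φ (a ^ (m + 1))‖ := by
  have h := buzano hφ (star a) (a ^ m)
  simp only [star_star] at h
  rw [norm_mul] at h
  have hpow : a * a ^ m = a ^ (m + 1) := (pow_succ' a m).symm
  rw [hpow] at h
  linarith [h, mul_comm (Real.sqrt ((φ (a * star a)).re))
    (Real.sqrt ((φ (star (a ^ m) * a ^ m)).re))]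

end Helpers

/-- inequality (2.4) in the proof of Theorem 2.6: for a state `φ` and `n ≥ 2`,
`|φ(a)|ⁿ ≤ Σ_{i=1}^{n−1} (1/2ⁱ)·√(φ(|aⁱ|²))·√(φ(|a*|²)^{n−i}) + (1/2^{n−1})·|φ(aⁿ)|`. -/
theorem abs_state_pow_le
    {A : Type*} [CStarAlgebra A] (a : A) (φ : A →ₗ[ℂ] ℂ) (hφ : IsState φ)
    (n : ℕ) (hn : 2 ≤ n) :
    ‖φ a‖ ^ n ≤
      (∑ i ∈ Finset.Icc 1 (n - 1),
          (1 / 2 ^ i : ℝ) * Real.sqrt (φ (star (a ^ i) * a ^ i)).re *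
            Real.sqrt ((φ (a * star a)).re ^ (n - i)))
        + (1 / 2 ^ (n - 1) : ℝ) * ‖φ (a ^ n)‖ := by
  have hr2 : 0 ≤ (φ (a * star a)).re := by
    have := renn hφ (star a); simpa [star_star] using this
  have ht0 : 0 ≤ ‖φ a‖ := norm_nonneg _
  have hr0 : 0 ≤ Real.sqrt ((φ (a * star a)).re) := Real.sqrt_nonneg _
  have htr : ‖φ a‖ ≤ Real.sqrt ((φ (a * star a)).re) := by
    have h := cs hφ (star a) 1
    simp only [star_star, mul_one, star_one, hφ.2, Complex.one_re] at h
    exact Real.le_sqrt_of_sq_le h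
  induction n, hn using Nat.le_induction with
  | base =>
    rw [show (2:ℕ) - 1 = 1 from rfl, Finset.Icc_self, Finset.sum_singleton]
    have hkey := keystep hφ a 1
    simp only [show (1:ℕ)+1 = 2 from rfl] at hkey
    simp only [show (2:ℕ)-1 = 1 from rfl, pow_one] at hkey ⊢
    nlinarith [hkey, Real.sqrt_nonneg ((φ (star a * a)).re),
      norm_nonneg (φ (a ^ 2))]
  | succ n hn ih =>
    simp only [Nat.add_sub_cancel] at ih ⊢
    simp only [sqrt_pow'' hr2] at ih ⊢
    obtain ⟨m, rfl⟩ : ∃ m, n = m + 1 := ⟨n - 1, by omega⟩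
    have hm : 1 ≤ m := by omega
    calc ‖φ a‖ ^ (m + 1 + 1)
        = ‖φ a‖ ^ (m + 1) * ‖φ a‖ := by ring
      _ ≤ ((∑ i ∈ Finset.Icc 1 m,
            (1 / 2 ^ i : ℝ) * Real.sqrt (φ (star (a ^ i) * a ^ i)).re *
              Real.sqrt ((φ (a * star a)).re) ^ (m + 1 - i))
          + (1 / 2 ^ m : ℝ) * ‖φ (a ^ (m + 1))‖) * ‖φ a‖ := by
          exact mul_le_mul_of_nonneg_right ih ht0
      _ = (∑ i ∈ Finset.Icc 1 m,
            (1 / 2 ^ i : ℝ) * Real.sqrt (φ (star (a ^ i) * a ^ i)).re *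
              Real.sqrt ((φ (a * star a)).re) ^ (m + 1 - i) * ‖φ a‖)
          + (1 / 2 ^ m : ℝ) * ‖φ (a ^ (m + 1))‖ * ‖φ a‖ := by
          rw [add_mul, Finset.sum_mul]
      _ ≤ (∑ i ∈ Finset.Icc 1 m,
            (1 / 2 ^ i : ℝ) * Real.sqrt (φ (star (a ^ i) * a ^ i)).re *
              Real.sqrt ((φ (a * star a)).re) ^ (m + 1 + 1 - i))
          + ((1 / 2 ^ (m + 1) : ℝ) * Real.sqrt (φ (star (a ^ (m + 1)) * a ^ (m + 1))).re *
              Real.sqrt ((φ (a * star a)).re) ^ (m + 1 + 1 - (m + 1))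
            + (1 / 2 ^ (m + 1) : ℝ) * ‖φ (a ^ (m + 1 + 1))‖) := by
          apply add_le_add
          · apply Finset.sum_le_sum
            intro i hi
            have hi' : i ≤ m := (Finset.mem_Icc.mp hi).2
            have hexp : m + 1 + 1 - i = (m + 1 - i) + 1 := by omega
            rw [hexp, pow_succ]
            have h1 : Real.sqrt ((φ (a * star a)).re) ^ (m + 1 - i) * ‖φ a‖
                ≤ Real.sqrt ((φ (a * star a)).re) ^ (m + 1 - i) *
                    Real.sqrt ((φ (a * star a)).re) :=
              mul_le_mul_of_nonneg_left htr (pow_nonneg hr0 _)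
            have h2 : (0:ℝ) ≤ (1 / 2 ^ i : ℝ) * Real.sqrt (φ (star (a ^ i) * a ^ i)).re := by
              positivity
            nlinarith [mul_le_mul_of_nonneg_left h1 h2]
          · have hone : m + 1 + 1 - (m + 1) = 1 := by omega
            rw [hone, pow_one]
            have hc : (0:ℝ) < 1 / 2 ^ (m + 1) := by positivity
            have hkey := mul_le_mul_of_nonneg_left (keystep hφ a (m + 1)) hc.le
            have h2m : (1 / 2 ^ m : ℝ) = 2 * (1 / 2 ^ (m + 1)) := by
              rw [pow_succ]; ring
            rw [h2m]
            nlinarith [hkey]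
      _ = (∑ i ∈ Finset.Icc 1 (m + 1),
            (1 / 2 ^ i : ℝ) * Real.sqrt (φ (star (a ^ i) * a ^ i)).re *
              Real.sqrt ((φ (a * star a)).re) ^ (m + 1 + 1 - i))
          + (1 / 2 ^ (m + 1) : ℝ) * ‖φ (a ^ (m + 1 + 1))‖ := by
          rw [Finset.sum_Icc_succ_top (by omega : 1 ≤ m + 1)]
          ring
end

section
/- Let A be a unital C*-algebra and a ∈ A. Then for every integer n ≥ 2: v(a)ⁿ ≤ (1/(2^{n−1} − 1))·Σ_{i=1}^{n−1} 2^{n−i−1}·‖a‖^{n−i}·‖aⁱ‖. -/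
open scoped ComplexOrder

namespace IsState
variable {A : Type*} [CStarAlgebra A] {φ : A →ₗ[ℂ] ℂ}

open Complex

lemma im_eq (hφ : IsState φ) (b : A) : (φ (star b * b)).im = 0 := by
  have h := hφ.1 b; rw [Complex.le_def] at h; exact h.2.symm

lemma re_nonneg (hφ : IsState φ) (b : A) : 0 ≤ (φ (star b * b)).re := by
  have h := hφ.1 b; rw [Complex.le_def] at h; simpa using h.1

lemma aux_im (hφ : IsState φ) (y : A) : (φ (star y)).im + (φ y).im = 0 := by
  have h := hφ.im_eq (y + 1)
  have e : star (y + 1) * (y + 1) = star y * y + (star y + (y + 1)) := by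
    simp [star_add, add_mul, mul_add]; abel
  rw [e] at h
  simpa [map_add, hφ.2, hφ.im_eq y, Complex.add_im] using h

lemma map_star (hφ : IsState φ) (x : A) : φ (star x) = starRingEnd ℂ (φ x) := by
  have h1 := hφ.aux_im x
  have h2 := hφ.aux_im ((Complex.I : ℂ) • x)
  rw [star_smul, map_smul, map_smul] at h2
  simp only [smul_eq_mul, map_mul, Complex.add_im, Complex.mul_im, Complex.I_re, Complex.I_im, Complex.star_def, Complex.conj_I, Complex.neg_im, Complex.neg_re,
    Complex.conj_re, Complex.conj_im] at h2
  apply Complex.ext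
  · simp only [Complex.conj_re]; linarith
  · simp only [Complex.conj_im]; linarith
end IsState

namespace IsState
variable {A : Type*} [CStarAlgebra A] {φ : A →ₗ[ℂ] ℂ}

lemma cs (hφ : IsState φ) (u v : A) :
    ‖φ (star u * v)‖ ^ 2 ≤ (φ (star u * u)).re * (φ (star v * v)).re := by
  have herm : φ (star v * u) = starRingEnd ℂ (φ (star u * v)) := by
    simpa [star_mul] using hφ.map_star (star u * v)
  set c := φ (star u * v) with hc
  have key : ∀ r : ℝ, 0 ≤ (φ (star v * v)).re - 2 * r * Complex.normSq c
      + r ^ 2 * Complex.normSq c * (φ (star u * u)).re := by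
    intro r
    have h0 := hφ.re_nonneg (v - ((r : ℂ) * c) • u)
    have e : star (v - ((r : ℂ) * c) • u) * (v - ((r : ℂ) * c) • u)
        = star v * v - ((r : ℂ) * c) • (star v * u) - (starRingEnd ℂ ((r : ℂ) * c)) • (star u * v)
          + (((r : ℂ) * c) * starRingEnd ℂ ((r : ℂ) * c)) • (star u * u) := by
      simp only [star_sub, star_smul, sub_mul, mul_sub, smul_mul_assoc, mul_smul_comm,
        smul_smul, star_star, Complex.star_def]
      module
    rw [e] at h0
    simp only [map_add, map_sub, map_smul, smul_eq_mul, herm, ← hc] at h0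
    have e1 : ((r:ℂ) * c * (starRingEnd ℂ c)).re = r * Complex.normSq c := by
      rw [mul_assoc, Complex.mul_conj]; simp
    have e2 : ((starRingEnd ℂ) ((r:ℂ) * c) * c).re = r * Complex.normSq c := by
      rw [map_mul, mul_assoc, mul_comm ((starRingEnd ℂ) c) c, Complex.mul_conj]
      simp
    have e3 : ((r:ℂ) * c) * (starRingEnd ℂ) ((r:ℂ) * c) = ((r ^ 2 * Complex.normSq c : ℝ) : ℂ) := by
      rw [show ((r:ℂ) * c * (starRingEnd ℂ) ((r:ℂ) * c)) = ((r:ℂ) * c) * (starRingEnd ℂ) ((r:ℂ) * c) from rfl,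
        Complex.mul_conj]
      push_cast
      rw [Complex.normSq_mul, Complex.normSq_ofReal]
      push_cast
      ring
    rw [Complex.add_re, Complex.sub_re, Complex.sub_re, e1, e2, e3] at h0
    rw [Complex.re_ofReal_mul] at h0
    linarith
  rw [Complex.sq_norm]
  set α := (φ (star u * u)).re with hα'
  set β := (φ (star v * v)).re with hβ'
  set γ := Complex.normSq c with hγ'
  have hα : 0 ≤ α := hφ.re_nonneg u
  have hβ : 0 ≤ β := hφ.re_nonneg v
  have hγ : 0 ≤ γ := Complex.normSq_nonneg c
  rcases eq_or_lt_of_le hα with h|h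
  · rcases eq_or_lt_of_le hγ with h'|h'
    · nlinarith
    · exfalso
      have k := key ((β + 1) / (2 * γ))
      rw [← h] at k
      have hr : 2 * ((β + 1) / (2 * γ)) * γ = β + 1 := by
        field_simp
      rw [mul_zero, add_zero, hr] at k
      linarith
  · have k := key (1 / α)
    have h1 : (1/α)^2 * γ * α = γ/α := by
      field_simp
    have h2 : 2*(1/α)*γ = 2*(γ/α) := by ring
    rw [h1, h2] at k
    have : γ/α ≤ β := by linarith
    rw [div_le_iff₀ h] at this
    nlinarith

end IsState

namespace IsState
variable {A : Type*} [CStarAlgebra A] {φ : A →ₗ[ℂ] ℂ}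

lemma map_nonneg' (hφ : IsState φ) [PartialOrder A] [StarOrderedRing A]
    {h : A} (hh : 0 ≤ h) : 0 ≤ φ h := by
  rw [StarOrderedRing.nonneg_iff] at hh
  induction hh using AddSubmonoid.closure_induction with
  | mem x hx => obtain ⟨s, rfl⟩ := hx; exact hφ.1 s
  | zero => simp
  | add x y _ _ hx hy => rw [map_add]; exact add_nonneg hx hy

lemma re_le (hφ : IsState φ) (x : A) : (φ (star x * x)).re ≤ ‖x‖ ^ 2 := by
  letI := CStarAlgebra.spectralOrder A
  haveI := CStarAlgebra.spectralOrderedRing A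
  have h : star x * x ≤ algebraMap ℝ A (‖x‖ ^ 2) :=
    CStarAlgebra.star_mul_le_algebraMap_norm_sq
  have h2 : 0 ≤ φ (algebraMap ℝ A (‖x‖ ^ 2) - star x * x) :=
    hφ.map_nonneg' (sub_nonneg.2 h)
  have h3 : φ (algebraMap ℝ A (‖x‖ ^ 2)) = ((‖x‖ ^ 2 : ℝ) : ℂ) := by
    rw [IsScalarTower.algebraMap_apply ℝ ℂ A, Algebra.algebraMap_eq_smul_one, map_smul, hφ.2]
    simp
  rw [map_sub, h3, Complex.le_def] at h2
  have := h2.1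
  simp only [Complex.zero_re, Complex.sub_re, Complex.ofReal_re, sub_nonneg] at this
  exact this

lemma abs_le' (hφ : IsState φ) (x : A) : ‖φ x‖ ≤ ‖x‖ := by
  have h := hφ.cs 1 x
  simp only [star_one, one_mul] at h
  rw [hφ.2] at h
  simp only [Complex.one_re, one_mul] at h
  have h2 := (hφ.re_le x)
  have h3 := norm_nonneg (φ x)
  nlinarith [norm_nonneg x]

lemma two_mul_le (hφ : IsState φ) (x y : A) :
    2 * ‖φ x‖ * ‖φ y‖ ≤ ‖x‖ * ‖y‖ + ‖φ (x * y)‖ := by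
  set c := φ x with hcd
  set d := φ y with hdd
  set b := x - c • 1 with hb
  set b' := y - d • 1 with hb'
  have hxy : φ (b * b') = φ (x * y) - c * d := by
    rw [hb, hb']
    simp only [sub_mul, mul_sub, smul_mul_assoc, mul_smul_comm, one_mul, mul_one, smul_smul,
      map_sub, map_smul, hφ.2, smul_eq_mul]
    ring
  have hbb : (φ (b * star b)).re = (φ (x * star x)).re - Complex.normSq c := by
    have : b * star b = x * star x - (starRingEnd ℂ c) • x - c • star x
        + (c * starRingEnd ℂ c) • 1 := by
      rw [hb]
      simp only [star_sub, star_smul, Complex.star_def, star_one, sub_mul, mul_sub,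
        smul_mul_assoc, mul_smul_comm, one_mul, mul_one, smul_smul]
      module
    rw [this, map_add, map_sub, map_sub, map_smul, map_smul, map_smul, hφ.2,
      hφ.map_star x, ← hcd]
    rw [Complex.mul_conj]
    simp only [smul_eq_mul, mul_one, Complex.add_re, Complex.sub_re, Complex.mul_re]
    have : ((starRingEnd ℂ) c).re = c.re := Complex.conj_re c
    have : ((starRingEnd ℂ) c).im = -c.im := Complex.conj_im c
    simp [Complex.conj_re, Complex.conj_im, Complex.normSq_apply]
  have hb'b' : (φ (star b' * b')).re = (φ (star y * y)).re - Complex.normSq d := by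
    have : star b' * b' = star y * y - d • star y - (starRingEnd ℂ d) • y
        + (starRingEnd ℂ d * d) • 1 := by
      rw [hb']
      simp only [star_sub, star_smul, Complex.star_def, star_one, sub_mul, mul_sub,
        smul_mul_assoc, mul_smul_comm, one_mul, mul_one, smul_smul]
      module
    rw [this, map_add, map_sub, map_sub, map_smul, map_smul, map_smul, hφ.2,
      hφ.map_star y, ← hdd]
    rw [mul_comm ((starRingEnd ℂ) d) d, Complex.mul_conj]
    simp [smul_eq_mul, Complex.conj_re, Complex.conj_im, Complex.normSq_apply, Complex.mul_re]
  -- Cauchy-Schwarz for b, b'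
  have hcs := hφ.cs (star b) b'
  rw [star_star] at hcs
  rw [hxy, hbb, hb'b'] at hcs
  have hxx : (φ (x * star x)).re ≤ ‖x‖ ^ 2 := by
    have := hφ.re_le (star x)
    rwa [star_star, norm_star] at this
  have hyy : (φ (star y * y)).re ≤ ‖y‖ ^ 2 := hφ.re_le y
  have hbbnn : 0 ≤ (φ (x * star x)).re - Complex.normSq c := by
    rw [← hbb]
    have := hφ.re_nonneg (star b); rwa [star_star] at this
  have hb'nn : 0 ≤ (φ (star y * y)).re - Complex.normSq d := by
    rw [← hb'b']; exact hφ.re_nonneg b'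
  set p := ‖c‖
  set q := ‖d‖
  set R := ‖φ (x * y)‖
  set E := ‖φ (x * y) - c * d‖
  have hE2 : E ^ 2 ≤ (‖x‖ ^ 2 - p ^ 2) * (‖y‖ ^ 2 - q ^ 2) := by
    have h1 : (φ (x * star x)).re - Complex.normSq c ≤ ‖x‖ ^ 2 - p ^ 2 := by
      rw [← Complex.sq_norm]; linarith
    have h2 : (φ (star y * y)).re - Complex.normSq d ≤ ‖y‖ ^ 2 - q ^ 2 := by
      rw [← Complex.sq_norm]; linarith
    calc E ^ 2 ≤ ((φ (x * star x)).re - Complex.normSq c) *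
          ((φ (star y * y)).re - Complex.normSq d) := hcs
      _ ≤ (‖x‖ ^ 2 - p ^ 2) * (‖y‖ ^ 2 - q ^ 2) := by
          apply mul_le_mul h1 h2 hb'nn (by linarith)
  have hpq : p * q ≤ R + E := by
    have e : c * d = φ (x * y) + -(φ (x * y) - c * d) := by ring
    calc p * q = ‖c * d‖ := (norm_mul c d).symm
      _ = ‖φ (x * y) + -(φ (x * y) - c * d)‖ := by rw [← e]
      _ ≤ R + ‖-(φ (x * y) - c * d)‖ := norm_add_le _ _
      _ = R + E := by rw [norm_neg]
  have hp : p ≤ ‖x‖ := hφ.abs_le' x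
  have hq : q ≤ ‖y‖ := hφ.abs_le' y
  have hp0 : 0 ≤ p := norm_nonneg c
  have hq0 : 0 ≤ q := norm_nonneg d
  have hE0 : 0 ≤ E := norm_nonneg _
  have hR0 : 0 ≤ R := norm_nonneg _
  have hD : p * q ≤ ‖x‖ * ‖y‖ := mul_le_mul hp hq hq0 (norm_nonneg x)
  have hsq : E ^ 2 ≤ (‖x‖ * ‖y‖ - p * q) ^ 2 := by
    nlinarith [sq_nonneg (‖x‖ * q - p * ‖y‖)]
  have hE : E ≤ ‖x‖ * ‖y‖ - p * q := by
    nlinarith [hsq, hE0, hD]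
  linarith

end IsState

namespace IsState
variable {A : Type*} [CStarAlgebra A] {φ : A →ₗ[ℂ] ℂ}

lemma chainW (hφ : IsState φ) (a : A) (j : ℕ) :
    (2:ℝ)^j * (‖φ a‖)^(j+2) ≤
      (∑ k ∈ Finset.range j, (2:ℝ)^k * ‖a‖^(k+2) * ‖a^(j-k)‖) +
        ‖φ a‖ * ‖φ (a^(j+1))‖ := by
  set p := ‖φ a‖ with hp'
  have hp0 : 0 ≤ p := norm_nonneg _
  have hp : p ≤ ‖a‖ := hφ.abs_le' a
  induction j with
  | zero => simp [pow_one, sq]; exact le_of_eq (by rw [hp'])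
  | succ j ih =>
    have hstep : 2 * p * ‖φ (a^(j+1))‖ ≤
        ‖a‖ * ‖a^(j+1)‖ + ‖φ (a^(j+2))‖ := by
      have := hφ.two_mul_le a (a^(j+1))
      rwa [← pow_succ' a (j+1)] at this
    have hSnn : (0:ℝ) ≤ ∑ k ∈ Finset.range j, (2:ℝ)^k * ‖a‖^(k+2) * ‖a^(j-k)‖ :=
      Finset.sum_nonneg fun k _ => by positivity
    have hsum : ∑ k ∈ Finset.range (j+1), (2:ℝ)^k * ‖a‖^(k+2) * ‖a^(j+1-k)‖
        = 2 * ‖a‖ * (∑ k ∈ Finset.range j, (2:ℝ)^k * ‖a‖^(k+2) * ‖a^(j-k)‖)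
          + ‖a‖ * ‖a‖ * ‖a^(j+1)‖ := by
      rw [Finset.sum_range_succ']
      simp only [Nat.succ_sub_succ, pow_zero, one_mul, Nat.sub_zero]
      rw [Finset.mul_sum]
      congr 1
      · exact Finset.sum_congr rfl fun k _ => by ring
      · ring
    calc (2:ℝ)^(j+1) * p^(j+3)
        = 2*p * ((2:ℝ)^j * p^(j+2)) := by ring
      _ ≤ 2*p * ((∑ k ∈ Finset.range j, (2:ℝ)^k * ‖a‖^(k+2) * ‖a^(j-k)‖)
            + p * ‖φ (a^(j+1))‖) := by
          apply mul_le_mul_of_nonneg_left ih (by positivity)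
      _ = 2*p*(∑ k ∈ Finset.range j, (2:ℝ)^k * ‖a‖^(k+2) * ‖a^(j-k)‖)
            + p * (2 * p * ‖φ (a^(j+1))‖) := by ring
      _ ≤ 2*‖a‖*(∑ k ∈ Finset.range j, (2:ℝ)^k * ‖a‖^(k+2) * ‖a^(j-k)‖)
            + p * (‖a‖ * ‖a^(j+1)‖ + ‖φ (a^(j+2))‖) := by
          gcongr
      _ = 2*‖a‖*(∑ k ∈ Finset.range j, (2:ℝ)^k * ‖a‖^(k+2) * ‖a^(j-k)‖)
            + p * ‖a‖ * ‖a^(j+1)‖ + p * ‖φ (a^(j+2))‖ := by ring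
      _ ≤ 2*‖a‖*(∑ k ∈ Finset.range j, (2:ℝ)^k * ‖a‖^(k+2) * ‖a^(j-k)‖)
            + ‖a‖ * ‖a‖ * ‖a^(j+1)‖ + p * ‖φ (a^(j+2))‖ := by
          gcongr
      _ = (∑ k ∈ Finset.range (j+1), (2:ℝ)^k * ‖a‖^(k+2) * ‖a^(j+1-k)‖)
            + p * ‖φ (a^(j+2))‖ := by rw [hsum]; try ring

lemma chainT (hφ : IsState φ) (a : A) (j : ℕ) (hj : 1 ≤ j) :
    ((2:ℝ)^j - 1) * (‖φ a‖)^(j+1) ≤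
      ∑ k ∈ Finset.range j, (2:ℝ)^k * ‖a‖^(k+1) * ‖a^(j-k)‖ := by
  set p := ‖φ a‖ with hp'
  have hp0 : 0 ≤ p := norm_nonneg _
  have hp : p ≤ ‖a‖ := hφ.abs_le' a
  induction j, hj using Nat.le_induction with
  | base =>
    simp only [Finset.range_one, Finset.sum_singleton, pow_zero, pow_one, one_mul,
      Nat.sub_zero]
    have hsq : p^2 ≤ ‖a‖^2 := pow_le_pow_left₀ hp0 hp 2
    rw [pow_one, show ((2:ℝ)-1) * p^(1+1) = p^2 from by ring, show ‖a‖*‖a‖ = ‖a‖^2 from by ring]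
    exact hsq
  | succ j hj ih =>
    have hSnn : (0:ℝ) ≤ ∑ k ∈ Finset.range j, (2:ℝ)^k * ‖a‖^(k+1) * ‖a^(j-k)‖ :=
      Finset.sum_nonneg fun k _ => by positivity
    have h1le : (1:ℝ) ≤ 2^j := by
      simpa using pow_le_pow_left₀ (by norm_num : (0:ℝ) ≤ 1) (by norm_num : (1:ℝ) ≤ 2) j
    have h1 : (2:ℝ)^j * p^(j+2) ≤
        (∑ k ∈ Finset.range j, (2:ℝ)^k * ‖a‖^(k+2) * ‖a^(j-k)‖) + ‖a‖ * ‖a^(j+1)‖ := by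
      refine (hφ.chainW a j).trans ?_
      gcongr
      · exact hφ.abs_le' _
    have h2 : ((2:ℝ)^j - 1) * p^(j+2) ≤
        ∑ k ∈ Finset.range j, (2:ℝ)^k * ‖a‖^(k+2) * ‖a^(j-k)‖ := by
      calc ((2:ℝ)^j - 1) * p^(j+2) = (((2:ℝ)^j - 1) * p^(j+1)) * p := by ring
        _ ≤ (∑ k ∈ Finset.range j, (2:ℝ)^k * ‖a‖^(k+1) * ‖a^(j-k)‖) * p := by
            apply mul_le_mul_of_nonneg_right ih hp0
        _ ≤ (∑ k ∈ Finset.range j, (2:ℝ)^k * ‖a‖^(k+1) * ‖a^(j-k)‖) * ‖a‖ := by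
            apply mul_le_mul_of_nonneg_left hp hSnn
        _ = ∑ k ∈ Finset.range j, (2:ℝ)^k * ‖a‖^(k+2) * ‖a^(j-k)‖ := by
            rw [Finset.sum_mul]
            exact Finset.sum_congr rfl fun k _ => by ring
    have hsum : ∑ k ∈ Finset.range (j+1), (2:ℝ)^k * ‖a‖^(k+1) * ‖a^(j+1-k)‖
        = 2 * (∑ k ∈ Finset.range j, (2:ℝ)^k * ‖a‖^(k+2) * ‖a^(j-k)‖)
          + ‖a‖ * ‖a^(j+1)‖ := by
      rw [Finset.sum_range_succ']
      simp only [Nat.succ_sub_succ, pow_zero, one_mul, Nat.sub_zero]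
      rw [Finset.mul_sum]
      congr 1
      · exact Finset.sum_congr rfl fun k _ => by ring
      · rw [pow_one]
    calc ((2:ℝ)^(j+1) - 1) * p^(j+2)
        = (2:ℝ)^j * p^(j+2) + ((2:ℝ)^j - 1) * p^(j+2) := by ring
      _ ≤ ((∑ k ∈ Finset.range j, (2:ℝ)^k * ‖a‖^(k+2) * ‖a^(j-k)‖) + ‖a‖ * ‖a^(j+1)‖)
          + ∑ k ∈ Finset.range j, (2:ℝ)^k * ‖a‖^(k+2) * ‖a^(j-k)‖ := add_le_add h1 h2
      _ = ∑ k ∈ Finset.range (j+1), (2:ℝ)^k * ‖a‖^(k+1) * ‖a^(j+1-k)‖ := by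
          rw [hsum]; ring

lemma bound (hφ : IsState φ) (a : A) (n : ℕ) (hn : 2 ≤ n) :
    ((2:ℝ)^(n-1) - 1) * (‖φ a‖)^n ≤
      ∑ i ∈ Finset.Icc 1 (n-1), (2:ℝ)^(n-i-1) * ‖a‖^(n-i) * ‖a^i‖ := by
  obtain ⟨j, rfl⟩ : ∃ j, n = j + 1 := ⟨n-1, by omega⟩
  have hj : 1 ≤ j := by omega
  have key := hφ.chainT a j hj
  have hsum : ∑ i ∈ Finset.Icc 1 (j+1-1), (2:ℝ)^(j+1-i-1) * ‖a‖^(j+1-i) * ‖a^i‖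
      = ∑ k ∈ Finset.range j, (2:ℝ)^k * ‖a‖^(k+1) * ‖a^(j-k)‖ := by
    refine Finset.sum_nbij' (i := fun i => j - i) (j := fun k => j - k) ?_ ?_ ?_ ?_ ?_
    · intro i hi
      simp only [Finset.mem_Icc] at hi
      simp only [Finset.mem_range]
      omega
    · intro k hk
      simp only [Finset.mem_range] at hk
      simp only [Finset.mem_Icc]
      omega
    · intro i hi
      simp only [Finset.mem_Icc, Nat.add_sub_cancel] at hi
      show j - (j - i) = i
      omega
    · intro k hk
      simp only [Finset.mem_range] at hk
      show j - (j - k) = k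
      omega
    · intro i hi
      simp only [Finset.mem_Icc] at hi
      have e1 : j + 1 - i - 1 = j - i := by omega
      have e2 : j + 1 - i = (j - i) + 1 := by omega
      have e3 : j - (j - i) = i := by omega
      rw [e1, e2, e3]
  rw [show j + 1 - 1 = j from rfl] at hsum ⊢
  rw [hsum]
  exact key

end IsState

/-- Corollary 2.7: for every integer `n ≥ 2`,
`v(a)ⁿ ≤ (1/(2^{n−1} − 1))·Σ_{i=1}^{n−1} 2^{n−i−1}·‖a‖^{n−i}·‖aⁱ‖`. -/
theorem numRadius_pow_le'
    {A : Type*} [CStarAlgebra A] (a : A) (n : ℕ) (hn : 2 ≤ n) :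
    numRadius a ^ n ≤
      (1 / ((2 : ℝ) ^ (n - 1) - 1)) *
        ∑ i ∈ Finset.Icc 1 (n - 1), (2 : ℝ) ^ (n - i - 1) * ‖a‖ ^ (n - i) * ‖a ^ i‖ := by
  set S := ∑ i ∈ Finset.Icc 1 (n - 1), (2 : ℝ) ^ (n - i - 1) * ‖a‖ ^ (n - i) * ‖a ^ i‖ with hS
  set C := (1 / ((2 : ℝ) ^ (n - 1) - 1)) * S with hC
  have hS0 : 0 ≤ S := Finset.sum_nonneg fun i _ => by positivity
  have h2 : (1:ℝ) < 2 ^ (n - 1) := by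
    apply one_lt_pow₀ (by norm_num : (1:ℝ) < 2)
    omega
  have hC0 : 0 ≤ C := by
    apply mul_nonneg _ hS0
    rw [one_div]
    exact inv_nonneg.mpr (by linarith)
  have hn0 : (n:ℝ) ≠ 0 := Nat.cast_ne_zero.mpr (by omega)
  have key : ∀ r ∈ {r : ℝ | ∃ φ : A →ₗ[ℂ] ℂ, IsState φ ∧ r = ‖φ a‖},
      r ^ n ≤ C := by
    rintro r ⟨φ, hφ, rfl⟩
    have hb := hφ.bound a n hn
    rw [hC, one_div, ← div_eq_inv_mul, le_div_iff₀ (by linarith)]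
    linarith [hb]
  have hle : numRadius a ≤ C ^ (1/(n:ℝ)) := by
    apply Real.sSup_le _ (Real.rpow_nonneg hC0 _)
    rintro r hr
    obtain ⟨φ, hφ, rfl⟩ := hr
    have hr0 : (0:ℝ) ≤ ‖φ a‖ := norm_nonneg _
    have hrn : (‖φ a‖) ^ n ≤ C := key _ ⟨φ, hφ, rfl⟩
    calc ‖φ a‖ = ((‖φ a‖) ^ n) ^ (1/(n:ℝ)) := by
          rw [← Real.rpow_natCast (‖φ a‖) n, ← Real.rpow_mul hr0,
            mul_one_div, div_self hn0, Real.rpow_one]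
      _ ≤ C ^ (1/(n:ℝ)) := Real.rpow_le_rpow (by positivity) hrn (by positivity)
  have hnr0 : 0 ≤ numRadius a := by
    apply Real.sSup_nonneg
    rintro r ⟨φ, hφ, rfl⟩
    exact norm_nonneg _
  calc numRadius a ^ n ≤ (C ^ (1/(n:ℝ))) ^ n := pow_le_pow_left₀ hnr0 hle n
    _ = C := by
        rw [← Real.rpow_natCast (C ^ (1/(n:ℝ))) n, ← Real.rpow_mul hC0,
          one_div, inv_mul_cancel₀ hn0, Real.rpow_one]
end

section
/- Let A be a unital C*-algebra and a ∈ A. If v(a) = ‖a‖, then v(a) = r(a), where r(a) is the spectral radius of a. -/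
open scoped ComplexOrder ENNReal NNReal

section Aux
variable {A : Type*} [CStarAlgebra A]

private lemma state_expand (φ : A →ₗ[ℂ] ℂ) (x y : A) (c : ℂ) :
    φ (star (x + c • y) * (x + c • y)) =
      φ (star x * x) + c * φ (star x * y) + (starRingEnd ℂ) c * φ (star y * x)
        + ((starRingEnd ℂ) c * c) * φ (star y * y) := by
  have e : star (x + c • y) * (x + c • y) =
      star x * x + c • (star x * y) + (starRingEnd ℂ) c • (star y * x)
        + ((starRingEnd ℂ) c * c) • (star y * y) := by
    simp only [star_add, star_smul, Complex.star_def, add_mul, mul_add,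
      smul_mul_assoc, mul_smul_comm, smul_smul, smul_add, mul_comm]
    abel
  rw [e]
  simp [map_add, map_smul, mul_comm]

private lemma state_herm' {φ : A →ₗ[ℂ] ℂ} (hφ : ∀ b : A, 0 ≤ φ (star b * b)) (x y : A) :
    (starRingEnd ℂ) (φ (star y * x)) = φ (star x * y) := by
  have him : ∀ b : A, (φ (star b * b)).im = 0 := fun b => (Complex.nonneg_iff.mp (hφ b)).2.symm
  have h1 := him (x + (1 : ℂ) • y)
  have h2 := him (x + Complex.I • y)
  rw [state_expand] at h1 h2
  have hx := him x
  have hy := him y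
  set p := φ (star x * y)
  set q := φ (star y * x)
  simp only [map_one, one_mul, Complex.conj_I, Complex.add_im, Complex.mul_im,
    Complex.one_re, Complex.one_im, Complex.I_re, Complex.I_im, Complex.neg_re,
    Complex.neg_im, hx, hy, neg_mul, neg_neg, mul_one, mul_zero, zero_mul,
    add_zero, zero_add, one_mul] at h1 h2
  apply Complex.ext <;> simp only [Complex.conj_re, Complex.conj_im] <;> linarith

private noncomputable def stateCore (φ : A →ₗ[ℂ] ℂ) (hφ : ∀ b : A, 0 ≤ φ (star b * b)) :
    PreInnerProductSpace.Core ℂ A where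
  inner x y := φ (star x * y)
  conj_inner_symm x y := state_herm' hφ x y
  re_inner_nonneg x := (Complex.nonneg_iff.mp (hφ x)).1
  add_left x y z := by simp [star_add, add_mul, map_add]
  smul_left x y r := by
    simp [star_smul, smul_mul_assoc, map_smul, Complex.star_def, smul_eq_mul]

private lemma state_cs {φ : A →ₗ[ℂ] ℂ} (hφ : ∀ b : A, 0 ≤ φ (star b * b)) (x y : A) :
    ‖φ (star x * y)‖ ^ 2 ≤ (φ (star x * x)).re * (φ (star y * y)).re := by
  letI c := stateCore φ hφ
  letI : Inner ℂ A := InnerProductSpace.Core.toPreInner'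
  have h := InnerProductSpace.Core.inner_mul_inner_self_le (𝕜 := ℂ) (F := A) x y
  have hsymm := InnerProductSpace.Core.norm_inner_symm (𝕜 := ℂ) (F := A) x y
  have hi : ∀ u v : A, (inner ℂ u v : ℂ) = φ (star u * v) := fun _ _ => rfl
  rw [hi, hi, hi, hi] at h
  rw [hi, hi] at hsymm
  calc ‖φ (star x * y)‖ ^ 2
      = ‖φ (star x * y)‖ * ‖φ (star y * x)‖ := by
        rw [← hsymm]; simp [sq]
    _ ≤ (φ (star x * x)).re * (φ (star y * y)).re := h

private lemma state_nonneg [PartialOrder A] [StarOrderedRing A] {φ : A →ₗ[ℂ] ℂ}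
    (hφ : ∀ b : A, 0 ≤ φ (star b * b)) {x : A}
    (hx : 0 ≤ x) : 0 ≤ φ x := by
  have h1 : star (CFC.sqrt x) * CFC.sqrt x = x := by
    rw [(IsSelfAdjoint.of_nonneg (CFC.sqrt_nonneg x)).star_eq]
    exact CFC.sqrt_mul_sqrt_self x hx
  rw [← h1]
  exact hφ _

/-- `φ (star b * b) ≤ ‖b‖ ^ 2` for a state. -/

private lemma state_sq_bound {φ : A →ₗ[ℂ] ℂ} (hφ : ∀ b : A, 0 ≤ φ (star b * b))
    (hone : φ 1 = 1) (b : A) : (φ (star b * b)).re ≤ ‖b‖ ^ 2 := by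
  letI : PartialOrder A := CStarAlgebra.spectralOrder A
  letI : StarOrderedRing A := CStarAlgebra.spectralOrderedRing A
  have hsa : IsSelfAdjoint (star b * b) := IsSelfAdjoint.star_mul_self b
  have hle : star b * b ≤ algebraMap ℝ A ‖star b * b‖ := hsa.le_algebraMap_norm_self
  have h0 : 0 ≤ φ (algebraMap ℝ A ‖star b * b‖ - star b * b) :=
    state_nonneg hφ (by rwa [sub_nonneg])
  have halg : φ (algebraMap ℝ A ‖star b * b‖) = (‖star b * b‖ : ℂ) := by
    have : algebraMap ℝ A ‖star b * b‖ = (‖star b * b‖ : ℂ) • (1 : A) := by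
      rw [Algebra.algebraMap_eq_smul_one]
      norm_num
    rw [this, map_smul, hone, smul_eq_mul, mul_one]
  rw [map_sub, halg] at h0
  have := (Complex.nonneg_iff.mp h0).1
  simp only [Complex.sub_re, Complex.ofReal_re] at this
  have hb : ‖star b * b‖ = ‖b‖ ^ 2 := by
    rw [CStarRing.norm_star_mul_self, sq]
  linarith

/-- States are norm-bounded by 1. -/

private lemma state_abs_le {φ : A →ₗ[ℂ] ℂ} (hφ : ∀ b : A, 0 ≤ φ (star b * b))
    (hone : φ 1 = 1) (b : A) : ‖φ b‖ ≤ ‖b‖ := by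
  have h := state_cs hφ 1 b
  simp only [star_one, one_mul, hone, Complex.one_re] at h
  have h2 := state_sq_bound hφ hone b
  have habs : ‖φ b‖ ^ 2 ≤ ‖b‖ ^ 2 := by
    calc ‖φ b‖ ^ 2 ≤ (φ (star b * b)).re := h
      _ ≤ ‖b‖ ^ 2 := h2
  nlinarith [norm_nonneg (φ b), norm_nonneg b]

private lemma state_inv_bound {φ : A →ₗ[ℂ] ℂ} (hφ : ∀ b : A, 0 ≤ φ (star b * b))
    (hone : φ 1 = 1) {u : A} (hu : IsUnit u) :
    (‖(↑hu.unit⁻¹ : A)‖ ^ 2)⁻¹ ≤ (φ (star u * u)).re := by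
  haveI : Nontrivial A := by
    refine nontrivial_of_ne 1 0 fun e => ?_
    rw [e, map_zero] at hone
    exact one_ne_zero hone.symm
  set v : A := ↑hu.unit⁻¹ with hv
  have hvu : v * u = 1 := by
    rw [hv]
    calc (↑hu.unit⁻¹ : A) * u = ↑hu.unit⁻¹ * ↑hu.unit := by rw [hu.unit_spec]
      _ = 1 := hu.unit.inv_mul
  have hcs := state_cs hφ (star v) u
  rw [star_star, hvu, hone] at hcs
  simp only [norm_one, map_one, one_pow] at hcs
  have hb := state_sq_bound hφ hone (star v)
  rw [star_star] at hb
  have hnorm : ‖star v‖ = ‖v‖ := norm_star v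
  rw [hnorm] at hb
  have h1 : (0:ℝ) < ‖v‖ ^ 2 := by
    have hvn := norm_mul_le v u
    rw [hvu, norm_one] at hvn
    have h0 : ‖v‖ ≠ 0 := by
      intro e
      rw [e, zero_mul] at hvn
      linarith
    positivity
  have h2 : 0 ≤ (φ (star u * u)).re := (Complex.nonneg_iff.mp (hφ u)).1
  have h3 : 0 ≤ (φ (v * star v)).re := by
    have := (Complex.nonneg_iff.mp (hφ (star v))).1
    rwa [star_star] at this
  calc (‖v‖ ^ 2)⁻¹ = 1 / ‖v‖ ^ 2 := by ring
    _ ≤ (φ (star u * u)).re := by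
        rw [div_le_iff₀ h1]
        nlinarith

end Aux

set_option maxHeartbeats 1000000 in
/-- Corollary 2.9: if `v(a) = ‖a‖`, then the numerical radius of `a`
equals the spectral radius of `a`. -/
theorem numRadius_eq_spectralRadius_of_numRadius_eq_norm
    {A : Type*} [CStarAlgebra A] (a : A) (h : numRadius a = ‖a‖) :
    ENNReal.ofReal (numRadius a) = spectralRadius ℂ a := by
  rw [h]
  by_cases hza : ‖a‖ = 0
  · have ha0 : a = 0 := norm_eq_zero.mp hza
    rw [hza, ha0, spectrum.spectralRadius_zero, ENNReal.ofReal_zero]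
  have hapos : 0 < ‖a‖ := lt_of_le_of_ne (norm_nonneg a) (Ne.symm hza)
  haveI : Nontrivial A := nontrivial_of_ne a 0 (norm_ne_zero_iff.mp hza)
  by_contra hne
  have hle : spectralRadius ℂ a ≤ ENNReal.ofReal ‖a‖ :=
    by rw [ofReal_norm]; exact spectrum.spectralRadius_le_nnnorm (𝕜 := ℂ) a
  have hlt : spectralRadius ℂ a < ENNReal.ofReal ‖a‖ := hle.lt_of_ne (fun e => hne e.symm)
  set r : ℝ := (spectralRadius ℂ a).toReal with hrdef
  have hfin : spectralRadius ℂ a ≠ ⊤ := hlt.ne_top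
  have hr : r < ‖a‖ := by
    have := ENNReal.toReal_strict_mono (by simp) hlt
    rwa [ENNReal.toReal_ofReal (norm_nonneg a)] at this
  have hr0 : 0 ≤ r := ENNReal.toReal_nonneg
  set r' : ℝ := (r + ‖a‖) / 2 with hr'def
  have hr'1 : r < r' := by rw [hr'def]; linarith
  have hr'2 : r' < ‖a‖ := by rw [hr'def]; linarith
  have hr'0 : 0 ≤ r' := by rw [hr'def]; linarith
  set K : Set ℂ := Metric.closedBall (0 : ℂ) ‖a‖ \ Metric.ball (0 : ℂ) r' with hKdef
  have hK : IsCompact K := (isCompact_closedBall (0 : ℂ) ‖a‖).diff Metric.isOpen_ball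
  have hKres : ∀ z ∈ K, z ∈ resolventSet ℂ a := by
    intro z hz
    by_contra hzs
    have hzspec : z ∈ spectrum ℂ a := hzs
    have hzr : (‖z‖₊ : ℝ≥0∞) ≤ spectralRadius ℂ a :=
      le_iSup₂ (f := fun k (_ : k ∈ spectrum ℂ a) => (‖k‖₊ : ℝ≥0∞)) z hzspec
    have hzr' : ‖z‖ ≤ r := by
      rw [hrdef]
      have := ENNReal.toReal_mono hfin hzr
      simpa using this
    have hz2 : r' ≤ ‖z‖ := by
      have := hz.2
      rw [Metric.mem_ball, not_lt, dist_zero_right] at this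
      exact this
    linarith
  have hcont : ContinuousOn (fun z => resolvent a z) K := fun z hz =>
    ((spectrum.hasDerivAt_resolvent (hKres z hz)).continuousAt).continuousWithinAt
  obtain ⟨C, hC⟩ := hK.exists_bound_of_continuousOn hcont
  set C' : ℝ := max C 1 with hC'def
  have hC'1 : (1 : ℝ) ≤ C' := le_max_right C 1
  have hC'0 : (0 : ℝ) < C' := by linarith
  set m : ℝ := max (r' ^ 2) (‖a‖ ^ 2 - (C'⁻¹) ^ 2) with hmdef
  have hm0 : 0 ≤ m := le_trans (by positivity) (le_max_left _ _)
  have hm : m < ‖a‖ ^ 2 := by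
    apply max_lt
    · nlinarith
    · have : 0 < (C'⁻¹) ^ 2 := by positivity
      linarith
  set s : ℝ := Real.sqrt ((m + ‖a‖ ^ 2) / 2) with hsdef
  have hs0 : 0 ≤ s := Real.sqrt_nonneg _
  have hs2 : s ^ 2 = (m + ‖a‖ ^ 2) / 2 := Real.sq_sqrt (by linarith)
  have hsm : m < s ^ 2 := by rw [hs2]; linarith
  have hslt2 : s ^ 2 < ‖a‖ ^ 2 := by rw [hs2]; linarith
  have hslt : s < ‖a‖ := by nlinarith
  have hsr' : r' ≤ s := by
    have h1 : r' ^ 2 ≤ m := le_max_left _ _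
    nlinarith
  -- extract a state with |φ a| > s
  set S : Set ℝ := {x : ℝ | ∃ φ : A →ₗ[ℂ] ℂ, IsState φ ∧ x = ‖φ a‖} with hSdef
  have hS : S.Nonempty := by
    by_contra hSne
    rw [Set.not_nonempty_iff_eq_empty] at hSne
    rw [numRadius, ← hSdef, hSne, Real.sSup_empty] at h
    exact hza h.symm
  have hlt_sup : s < sSup S := by
    have : sSup S = ‖a‖ := h
    rw [this]; exact hslt
  obtain ⟨x, hxS, hsx⟩ := exists_lt_of_lt_csSup hS hlt_sup
  obtain ⟨φ, hφstate, rfl⟩ := hxS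
  obtain ⟨hφ, hone⟩ := hφstate
  set lam : ℂ := φ a with hlamdef
  have habs_le : ‖lam‖ ≤ ‖a‖ := state_abs_le hφ hone a
  have hlamK : lam ∈ K := by
    constructor
    · rw [Metric.mem_closedBall, dist_zero_right]
      exact habs_le
    · rw [Metric.mem_ball, dist_zero_right, not_lt]
      calc r' ≤ s := hsr'
        _ ≤ ‖lam‖ := le_of_lt hsx
  have hmem : lam ∈ resolventSet ℂ a := hKres lam hlamK
  have hu : IsUnit (algebraMap ℂ A lam - a) := hmem
  set u : A := algebraMap ℂ A lam - a with hudef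
  set b : A := algebraMap ℂ A lam with hbdef
  -- compute φ (star u * u)
  have hφalg : ∀ z : ℂ, φ (algebraMap ℂ A z) = z := fun z => by
    rw [Algebra.algebraMap_eq_smul_one, map_smul, hone, smul_eq_mul, mul_one]
  have hsb : star b = algebraMap ℂ A ((starRingEnd ℂ) lam) := by
    rw [hbdef, ← algebraMap_star_comm]
    rfl
  have hstar_a : φ (star a) = (starRingEnd ℂ) lam := by
    have := state_herm' hφ 1 a
    simp only [star_one, one_mul, mul_one] at this
    rw [hlamdef, ← this, Complex.conj_conj]
  have hsu : star u * u = star b * b - star b * a - star a * b + star a * a := by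
    rw [hudef, star_sub]
    noncomm_ring
  have h1 : φ (star b * b) = (starRingEnd ℂ) lam * lam := by
    rw [hsb, hbdef, ← map_mul, hφalg]
  have h2 : φ (star b * a) = (starRingEnd ℂ) lam * lam := by
    rw [hsb, Algebra.algebraMap_eq_smul_one, smul_mul_assoc, one_mul, map_smul, smul_eq_mul,
      ← hlamdef]
  have h3 : φ (star a * b) = lam * (starRingEnd ℂ) lam := by
    rw [hbdef, Algebra.algebraMap_eq_smul_one, mul_smul_comm, mul_one, map_smul, smul_eq_mul,
      hstar_a]
  have hval : (φ (star u * u)).re = (φ (star a * a)).re - ‖lam‖ ^ 2 := by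
    rw [hsu, map_add, map_sub, map_sub, h1, h2, h3]
    have : (starRingEnd ℂ) lam * lam - (starRingEnd ℂ) lam * lam - lam * (starRingEnd ℂ) lam
        + φ (star a * a) = φ (star a * a) - lam * (starRingEnd ℂ) lam := by ring
    rw [this, Complex.mul_conj]
    simp [Complex.sub_re, Complex.sq_norm]
  -- upper bound
  have hup : (φ (star u * u)).re < (C'⁻¹) ^ 2 := by
    have hb1 := state_sq_bound hφ hone a
    have habs2 : s ^ 2 < ‖lam‖ ^ 2 := by
      have : s < ‖lam‖ := hsx
      nlinarith [norm_nonneg lam]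
    have hm2 : ‖a‖ ^ 2 - (C'⁻¹) ^ 2 ≤ m := le_max_right _ _
    rw [hval]
    linarith
  -- lower bound
  have hlow : (‖(↑hu.unit⁻¹ : A)‖ ^ 2)⁻¹ ≤ (φ (star u * u)).re := state_inv_bound hφ hone hu
  set v : A := ↑hu.unit⁻¹ with hvdef
  have hveq : v = resolvent a lam := by
    rw [spectrum.resolvent_eq hmem, hvdef]
  have hvC : ‖v‖ ≤ C' := by
    rw [hveq]
    exact le_trans (hC lam hlamK) (le_max_left C 1)
  have hvpos : 0 < ‖v‖ := by
    have hone' : v * u = 1 := by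
      rw [hvdef]
      calc (↑hu.unit⁻¹ : A) * u = ↑hu.unit⁻¹ * ↑hu.unit := by rw [hu.unit_spec]
        _ = 1 := hu.unit.inv_mul
    have hvn := norm_mul_le v u
    rw [hone', norm_one] at hvn
    rcases lt_or_eq_of_le (norm_nonneg v) with h' | h'
    · exact h'
    · exfalso; rw [← h', zero_mul] at hvn; linarith
  -- contradiction
  have hA : 1 ≤ (φ (star u * u)).re * ‖v‖ ^ 2 := by
    rw [← div_le_iff₀ (by positivity : (0:ℝ) < ‖v‖ ^ 2)]
    calc (1 : ℝ) / ‖v‖ ^ 2 = (‖v‖ ^ 2)⁻¹ := one_div _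
      _ ≤ (φ (star u * u)).re := hlow
  have hB : (φ (star u * u)).re * C' ^ 2 < 1 := by
    rw [← lt_div_iff₀ (by positivity : (0:ℝ) < C' ^ 2)]
    calc (φ (star u * u)).re < (C'⁻¹) ^ 2 := hup
      _ = 1 / C' ^ 2 := by rw [one_div]; exact inv_pow C' 2
  have hφpos : 0 ≤ (φ (star u * u)).re := (Complex.nonneg_iff.mp (hφ u)).1
  have hsq : ‖v‖ ^ 2 ≤ C' ^ 2 := pow_le_pow_left₀ (norm_nonneg v) hvC 2
  have hmul := mul_le_mul_of_nonneg_left hsq hφpos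
  linarith
end

section
/- Let A be a unital C*-algebra and a ∈ A. Then v(a)³ ≤ (1/2)·‖a*a + aa*‖·‖a‖. -/
open scoped ComplexOrder

section aux

variable {A : Type*} [CStarAlgebra A] {φ : A →ₗ[ℂ] ℂ}

lemma isState_herm (hφ : IsState φ) (y : A) : φ (star y) = starRingEnd ℂ (φ y) := by
  have h1 := hφ.1 (y + (1:ℂ) • 1)
  have e1 : star (y + (1:ℂ) • 1) * (y + (1:ℂ) • 1)
      = star y * y + y + star y + (1:ℂ) • 1 := by
    simp [add_mul, mul_add, add_assoc]
  rw [e1] at h1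
  simp only [map_add, map_smul, hφ.2, smul_eq_mul, mul_one] at h1
  have h2 := hφ.1 (y + Complex.I • 1)
  have e2 : star (y + Complex.I • 1) * (y + Complex.I • 1)
      = star y * y + Complex.I • star y + (- Complex.I) • y + (1:ℂ) • 1 := by
    simp only [star_add, star_smul, star_one, add_mul, mul_add, smul_mul_assoc,
      mul_smul_comm, one_mul, mul_one, smul_smul, RCLike.star_def, Complex.conj_I,
      neg_smul, neg_mul, neg_neg, Complex.I_mul_I]
    match_scalars <;> simp [Complex.I_sq]
  rw [e2] at h2
  simp only [map_add, map_smul, hφ.2, smul_eq_mul, mul_one] at h2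
  have hp := hφ.1 y
  rw [Complex.le_def] at h1 h2 hp
  simp only [Complex.add_im, Complex.zero_im, Complex.mul_im, Complex.I_re, Complex.I_im,
    Complex.neg_im, Complex.neg_re, Complex.one_im, Complex.zero_re] at h1 h2 hp
  have him : (φ (star y)).im = - (φ y).im := by linarith [h1.2, hp.2]
  have hre : (φ (star y)).re = (φ y).re := by linarith [h2.2, hp.2]
  exact Complex.ext (by simp [hre]) (by simp [him])

lemma isState_cs (hφ : IsState φ) (y : A) :
    ‖φ y‖ ^ 2 ≤ (φ (star y * y)).re := by
  set u := φ y with hu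
  have h := hφ.1 (y + (-u) • 1)
  have e : star (y + (-u) • 1) * (y + (-u) • 1)
      = star y * y + (starRingEnd ℂ (-u)) • y + (-u) • star y
        + ((-u) * starRingEnd ℂ (-u)) • 1 := by
    simp only [star_add, star_smul, star_one, add_mul, mul_add, smul_mul_assoc,
      mul_smul_comm, one_mul, mul_one, smul_smul, RCLike.star_def]
    module
  rw [e] at h
  simp only [map_add, map_smul, hφ.2, smul_eq_mul, mul_one, isState_herm hφ y, ← hu] at h
  have heq : φ (star y * y) + starRingEnd ℂ (-u) * u + -u * starRingEnd ℂ u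
      + -u * starRingEnd ℂ (-u) = φ (star y * y) - u * starRingEnd ℂ u := by ring
  rw [heq] at h
  rw [Complex.le_def] at h
  have h' := h.1
  simp only [Complex.sub_re, Complex.zero_re] at h'
  have habs : (u * starRingEnd ℂ u).re = ‖u‖ ^ 2 := by
    rw [Complex.mul_conj, Complex.normSq_eq_norm_sq, Complex.ofReal_re]
  rw [habs] at h'
  linarith

variable [PartialOrder A] [StarOrderedRing A]

lemma isState_nonneg (hφ : IsState φ) {x : A} (hx : 0 ≤ x) : 0 ≤ φ x := by
  have h := hφ.1 (CFC.sqrt x)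
  rwa [(CFC.sqrt_nonneg (a := x)).isSelfAdjoint.star_eq, CFC.sqrt_mul_sqrt_self x hx] at h

lemma isState_le_norm (hφ : IsState φ) {x : A} (hx : 0 ≤ x) : (φ x).re ≤ ‖x‖ := by
  have hsa : IsSelfAdjoint x := hx.isSelfAdjoint
  have hle : x ≤ algebraMap ℝ A ‖x‖ := hsa.le_algebraMap_norm_self
  have h := isState_nonneg hφ (sub_nonneg.mpr hle)
  have e : algebraMap ℝ A ‖x‖ = ((‖x‖ : ℂ)) • (1 : A) := by
    rw [Algebra.algebraMap_eq_smul_one, ← Complex.coe_smul]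
  rw [map_sub, e, map_smul, hφ.2, Complex.le_def] at h
  simpa using h.1

end aux

/-- Corollary 2.12: `v(a)³ ≤ (1/2)·‖a*a + aa*‖·‖a‖`. -/
theorem numRadius_cube_le_half
    {A : Type*} [CStarAlgebra A] (a : A) :
    numRadius a ^ 3 ≤ (1 / 2) * ‖star a * a + a * star a‖ * ‖a‖ := by
  letI := CStarAlgebra.spectralOrder A
  haveI := CStarAlgebra.spectralOrderedRing A
  set S := {r : ℝ | ∃ φ : A →ₗ[ℂ] ℂ, IsState φ ∧ r = ‖φ a‖}
  set K : ℝ := (1 / 2) * ‖star a * a + a * star a‖ with hK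
  have hK0 : 0 ≤ K := by positivity
  have key : ∀ r ∈ S, r ^ 2 ≤ K ∧ r ≤ ‖a‖ := by
    rintro r ⟨φ, hφ, rfl⟩
    have h1 : ‖φ a‖ ^ 2 ≤ (φ (star a * a)).re := isState_cs hφ a
    have h2 : ‖φ a‖ ^ 2 ≤ (φ (a * star a)).re := by
      have := isState_cs hφ (star a)
      rwa [star_star, isState_herm hφ a, Complex.norm_conj] at this
    constructor
    · have hsum : (φ (star a * a + a * star a)).re ≤ ‖star a * a + a * star a‖ :=
        isState_le_norm hφ (add_nonneg (star_mul_self_nonneg a) (mul_star_self_nonneg a))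
      rw [map_add, Complex.add_re] at hsum
      rw [hK]; linarith
    · have hb : (φ (star a * a)).re ≤ ‖star a * a‖ :=
        isState_le_norm hφ (star_mul_self_nonneg a)
      rw [CStarRing.norm_star_mul_self] at hb
      nlinarith [norm_nonneg (φ a), norm_nonneg a]
  have hM0 : 0 ≤ numRadius a := Real.sSup_nonneg (by rintro r ⟨φ, hφ, rfl⟩; positivity)
  have hM1 : numRadius a ≤ Real.sqrt K := by
    refine Real.sSup_le (fun r hr => ?_) (Real.sqrt_nonneg _)
    have hr0 : 0 ≤ r := by obtain ⟨φ, hφ, rfl⟩ := hr; positivity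
    exact (Real.le_sqrt hr0 hK0).mpr (key r hr).1
  have hM2 : numRadius a ≤ ‖a‖ := Real.sSup_le (fun r hr => (key r hr).2) (norm_nonneg a)
  have hsq : numRadius a ^ 2 ≤ K := by
    calc numRadius a ^ 2 ≤ Real.sqrt K ^ 2 := by
          exact pow_le_pow_left₀ hM0 hM1 2
      _ = K := Real.sq_sqrt hK0
  calc numRadius a ^ 3 = numRadius a ^ 2 * numRadius a := by ring
    _ ≤ K * ‖a‖ := mul_le_mul hsq hM2 hM0 hK0
    _ = (1 / 2) * ‖star a * a + a * star a‖ * ‖a‖ := by rw [hK]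
end

section
/- Let A be a unital C*-algebra and a ∈ A. Then v(a)³ ≤ (1/3)·‖a*a + aa*‖·‖a‖ + (1/3)·‖a²‖·‖a‖. -/
open scoped ComplexOrder

open ComplexConjugate

section helpers

variable {A : Type*} [CStarAlgebra A] [PartialOrder A] [StarOrderedRing A]
  {φ : A →ₗ[ℂ] ℂ}

lemma st_nonneg (hpos : ∀ b : A, 0 ≤ φ (star b * b)) {c : A} (hc : 0 ≤ c) :
    0 ≤ φ c := by
  rw [StarOrderedRing.nonneg_iff] at hc
  induction hc using AddSubmonoid.closure_induction with
  | mem x hx => obtain ⟨s, rfl⟩ := hx; exact hpos s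
  | zero => simp
  | add x y _ _ hx hy => rw [map_add]; exact add_nonneg hx hy

lemma st_im (hpos : ∀ b : A, 0 ≤ φ (star b * b)) (b : A) :
    (φ (star b * b)).im = 0 := by
  have := hpos b
  rw [Complex.le_def] at this
  simpa using this.2.symm

lemma st_star (hpos : ∀ b : A, 0 ≤ φ (star b * b)) (h1 : φ 1 = 1) (x : A) :
    φ (star x) = conj (φ x) := by
  have e1 : star (1 + x) * (1 + x) = 1 + x + star x + star x * x := by
    rw [star_add, star_one]; noncomm_ring
  have e2 : star (1 + Complex.I • x) * (1 + Complex.I • x)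
      = 1 + Complex.I • x - Complex.I • star x + star x * x := by
    have hst : star (1 + Complex.I • x) = 1 - Complex.I • star x := by
      rw [star_add, star_one, star_smul, Complex.star_def, Complex.conj_I, neg_smul,
        ← sub_eq_add_neg]
    rw [hst, sub_mul, one_mul, mul_add, mul_one, smul_mul_smul_comm, Complex.I_mul_I,
      neg_one_smul]
    abel
  have h1' := st_im hpos (1 + x)
  have h2' := st_im hpos (1 + Complex.I • x)
  rw [e1] at h1'; rw [e2] at h2'
  have hx := st_im hpos x
  simp only [map_add, map_sub, map_smul, h1, Complex.add_im, Complex.sub_im,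
    Complex.one_im, Complex.smul_im, Complex.mul_im, Complex.I_re, Complex.I_im,
    smul_eq_mul, hx] at h1' h2'
  apply Complex.ext <;> [skip; skip] <;> simp [Complex.conj_re, Complex.conj_im] <;> linarith

lemma st_cs (hpos : ∀ b : A, 0 ≤ φ (star b * b)) (h1 : φ 1 = 1) (x : A) :
    ‖φ x‖ ^ 2 ≤ (φ (star x * x)).re := by
  set t : ℂ := φ x with ht
  have key : φ (star (x - t • 1) * (x - t • 1))
      = φ (star x * x) - Complex.normSq t := by
    have expand : star (x - t • 1) * (x - t • 1)
        = star x * x - t • star x - conj t • x + (conj t * t) • (1 : A) := by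
      rw [star_sub, star_smul, star_one, Complex.star_def, sub_mul, mul_sub, mul_sub,
        mul_smul_comm, smul_mul_assoc, smul_mul_assoc]
      simp only [one_mul, mul_one, smul_smul]
      abel
    rw [expand]
    simp only [map_add, map_sub, map_smul, h1, smul_eq_mul, mul_one,
      st_star hpos h1 x, ← ht]
    rw [Complex.normSq_eq_conj_mul_self]
    ring
  have h0 := hpos (x - t • 1)
  rw [key, Complex.le_def] at h0
  have := h0.1
  simp only [Complex.zero_re, Complex.sub_re, Complex.ofReal_re] at this
  rw [Complex.sq_norm]
  have : (Complex.normSq t : ℝ) ≤ (φ (star x * x)).re := by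
    have h2 : ((Complex.normSq t : ℂ)).re = (Complex.normSq t : ℝ) := by simp
    linarith [this]
  linarith

lemma st_re_le_norm (hpos : ∀ b : A, 0 ≤ φ (star b * b)) (h1 : φ 1 = 1)
    {c : A} (hc : 0 ≤ c) : (φ c).re ≤ ‖c‖ := by
  have hsa : IsSelfAdjoint c := IsSelfAdjoint.of_nonneg hc
  have hle : c ≤ algebraMap ℝ A ‖c‖ := hsa.le_algebraMap_norm_self
  have h0 : 0 ≤ φ (algebraMap ℝ A ‖c‖ - c) := st_nonneg hpos (by simpa using hle)
  have halg : φ (algebraMap ℝ A ‖c‖) = (‖c‖ : ℂ) := by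
    rw [IsScalarTower.algebraMap_apply ℝ ℂ A, Algebra.algebraMap_eq_smul_one, map_smul, h1]
    simp
  rw [map_sub, halg, Complex.le_def] at h0
  have := h0.1
  simp only [Complex.zero_re, Complex.sub_re, Complex.ofReal_re] at this
  linarith

lemma st_abs_le_norm (hpos : ∀ b : A, 0 ≤ φ (star b * b)) (h1 : φ 1 = 1) (x : A) :
    ‖φ x‖ ≤ ‖x‖ := by
  have h := (st_cs hpos h1 x).trans (st_re_le_norm hpos h1 (star_mul_self_nonneg x))
  rw [CStarRing.norm_star_mul_self] at h
  nlinarith [norm_nonneg (φ x), norm_nonneg x]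

end helpers

section mainbound

variable {A : Type*} [CStarAlgebra A] [PartialOrder A] [StarOrderedRing A]
  {φ : A →ₗ[ℂ] ℂ}

lemma st_sq_bound (hpos : ∀ b : A, 0 ≤ φ (star b * b)) (h1 : φ 1 = 1) (a : A) :
    ‖φ a‖ ^ 2 ≤ (‖star a * a + a * star a‖ + ‖a ^ 2‖) / 3 := by
  set S : ℝ := ‖star a * a + a * star a‖ with hSdef
  set T : ℝ := ‖a ^ 2‖ with hTdef
  set r : ℝ := ‖φ a‖ with hrdef
  have hr0 : 0 ≤ r := norm_nonneg _
  have hsum_nonneg : (0 : A) ≤ star a * a + a * star a :=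
    add_nonneg (star_mul_self_nonneg a) (mul_star_self_nonneg a)
  -- first bound : 2 r^2 ≤ S
  have hS1 : r ^ 2 ≤ (φ (star a * a)).re := st_cs hpos h1 a
  have hS2 : r ^ 2 ≤ (φ (a * star a)).re := by
    have h := st_cs hpos h1 (star a)
    rw [star_star, st_star hpos h1, Complex.norm_conj] at h
    exact h
  have hS : (φ (star a * a)).re + (φ (a * star a)).re ≤ S := by
    have h := st_re_le_norm hpos h1 hsum_nonneg
    rwa [map_add, Complex.add_re] at h
  have h2r : 2 * r ^ 2 ≤ S := by linarith
  -- second bound : 4 r^2 ≤ 2 T + S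
  by_cases hz : φ a = 0
  · have : r = 0 := by simp [hrdef, hz]
    rw [this]
    have hT0 : 0 ≤ T := norm_nonneg _
    have hS0 : 0 ≤ S := norm_nonneg _
    nlinarith
  · set z : ℂ := φ a with hzdef
    have habsz : ‖z‖ ≠ 0 := by simpa using hz
    set u : ℂ := conj z / (‖z‖ : ℂ) with hudef
    have huz : u * z = (r : ℂ) := by
      rw [hudef, div_mul_eq_mul_div, ← Complex.normSq_eq_conj_mul_self,
        ← Complex.sq_norm, hrdef]
      push_cast
      field_simp
    have hu1 : u * conj u = 1 := by
      have : ‖u‖ = 1 := by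
        rw [hudef, norm_div, Complex.norm_conj, Complex.norm_real, Real.norm_eq_abs, abs_of_nonneg hr0]
        rw [hrdef]; field_simp
      rw [Complex.mul_conj]
      norm_cast
      rw [← Complex.sq_norm, this]; norm_num
    have hu1' : conj u * u = 1 := by rwa [mul_comm] at hu1
    set b : A := u • a with hbdef
    have hφb : φ b = (r : ℝ) := by rw [hbdef, map_smul, smul_eq_mul, ← hzdef, huz]
    have hφsb : φ (star b) = (r : ℝ) := by
      rw [st_star hpos h1, hφb]; simp
    set k : A := b + star b with hkdef
    have hks : star k = k := by rw [hkdef, star_add, star_star, add_comm]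
    have hφk : φ k = ((2 * r : ℝ) : ℂ) := by
      rw [hkdef, map_add, hφb, hφsb]; push_cast; ring
    have hcs : (2 * r) ^ 2 ≤ (φ (k * k)).re := by
      have h := st_cs hpos h1 k
      rw [hks, hφk] at h
      rwa [Complex.norm_real, Real.norm_eq_abs, abs_of_nonneg (by positivity)] at h
    have hkk : k * k = b * b + star b * star b + (a * star a + star a * a) := by
      have hbsb : b * star b = a * star a := by
        rw [hbdef, star_smul, Complex.star_def, smul_mul_smul_comm, hu1, one_smul]
      have hsbb : star b * b = star a * a := by
        rw [hbdef, star_smul, Complex.star_def, smul_mul_smul_comm, hu1', one_smul]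
      rw [hkdef, add_mul, mul_add, mul_add, hbsb, hsbb]
      abel
    have hbb : φ (b * b) = (u * u) * φ (a ^ 2) := by
      rw [hbdef, smul_mul_smul_comm, map_smul, smul_eq_mul, sq]
    have hsbsb : φ (star b * star b) = conj (φ (b * b)) := by
      rw [← star_mul, st_star hpos h1]
    have habs_bb : ‖φ (b * b)‖ ≤ T := by
      rw [hbb, norm_mul]
      calc ‖u * u‖ * ‖φ (a ^ 2)‖
          ≤ 1 * ‖a ^ 2‖ := by
            have h1' : ‖u * u‖ = 1 := by
              have : ‖u‖ = 1 := by
                have := hu1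
                rw [Complex.mul_conj] at this
                norm_cast at this
                nlinarith [Complex.sq_norm u, norm_nonneg u]
              rw [norm_mul, this]; ring
            rw [h1']
            simpa using mul_le_mul_of_nonneg_left (st_abs_le_norm hpos h1 (a ^ 2))
              (by norm_num : (0:ℝ) ≤ 1)
        _ = T := by rw [one_mul]
    have hre_sum : (φ (a * star a + star a * a)).re ≤ S := by
      have h := st_re_le_norm hpos h1 (show (0:A) ≤ a * star a + star a * a by
        exact add_nonneg (mul_star_self_nonneg a) (star_mul_self_nonneg a))
      rw [hSdef, show star a * a + a * star a = a * star a + star a * a from add_comm _ _]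
      exact h
    have h4r : 4 * r ^ 2 ≤ 2 * T + S := by
      have hre : (φ (k * k)).re
          = 2 * (φ (b * b)).re + (φ (a * star a + star a * a)).re := by
        rw [hkk, map_add, map_add, hsbsb, Complex.add_re, Complex.add_re,
          Complex.conj_re]
        ring
      have hrebb : (φ (b * b)).re ≤ T :=
        (Complex.re_le_norm _).trans habs_bb
      nlinarith [hcs]
    linarith

end mainbound

/-- Corollary 2.14:
`v(a)³ ≤ (1/3)·‖a*a + aa*‖·‖a‖ + (1/3)·‖a²‖·‖a‖`. -/
theorem numRadius_cube_le_third
    {A : Type*} [CStarAlgebra A] (a : A) :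
    numRadius a ^ 3 ≤
      (1 / 3) * ‖star a * a + a * star a‖ * ‖a‖ + (1 / 3) * ‖a ^ 2‖ * ‖a‖ := by
  letI := CStarAlgebra.spectralOrder A
  haveI := CStarAlgebra.spectralOrderedRing A
  set M : ℝ := (‖star a * a + a * star a‖ + ‖a ^ 2‖) / 3 with hMdef
  have hM : 0 ≤ M := by positivity
  have hub1 : ∀ r ∈ {r : ℝ | ∃ φ : A →ₗ[ℂ] ℂ, IsState φ ∧ r = ‖φ a‖},
      r ≤ ‖a‖ := by
    rintro r ⟨φ, ⟨hpos, h1⟩, rfl⟩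
    exact st_abs_le_norm hpos h1 a
  have hub2 : ∀ r ∈ {r : ℝ | ∃ φ : A →ₗ[ℂ] ℂ, IsState φ ∧ r = ‖φ a‖},
      r ≤ Real.sqrt M := by
    rintro r ⟨φ, ⟨hpos, h1⟩, rfl⟩
    rw [Real.le_sqrt (norm_nonneg _) hM]
    exact st_sq_bound hpos h1 a
  have hv1 : numRadius a ≤ ‖a‖ := Real.sSup_le hub1 (norm_nonneg a)
  have hv2 : numRadius a ≤ Real.sqrt M := Real.sSup_le hub2 (Real.sqrt_nonneg _)
  have hv0 : 0 ≤ numRadius a := by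
    apply Real.sSup_nonneg
    rintro r ⟨φ, _, rfl⟩
    exact norm_nonneg _
  have hsq : numRadius a ^ 2 ≤ M := by
    calc numRadius a ^ 2 ≤ Real.sqrt M ^ 2 := by
          exact pow_le_pow_left₀ hv0 hv2 2
      _ = M := Real.sq_sqrt hM
  calc numRadius a ^ 3 = numRadius a ^ 2 * numRadius a := by ring
    _ ≤ M * ‖a‖ := mul_le_mul hsq hv1 hv0 hM
    _ = (1 / 3) * ‖star a * a + a * star a‖ * ‖a‖ + (1 / 3) * ‖a ^ 2‖ * ‖a‖ := by
        rw [hMdef]; ring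
end

section
/- Let A be a unital C*-algebra and a ∈ A. Then v(a)³ ≤ (1/2)·‖a‖³ + (1/2)·min{ v(a*a²), v(a²a*) }. Moreover, if v(a) = ‖a‖, then v(a*a²) = v(a²a*) = ‖a‖³. -/
open scoped ComplexOrder

namespace NumRadiusAux

lemma sq_le_imp {a b : ℝ} (ha : 0 ≤ a) (hb : 0 ≤ b) (h : a ^ 2 ≤ b ^ 2) : a ≤ b := by
  nlinarith

variable {A : Type*} [CStarAlgebra A]

lemma im_eq_zero {φ : A →ₗ[ℂ] ℂ} (hφ : IsState φ) (x : A) :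
    (φ (star x * x)).im = 0 :=
  ((Complex.nonneg_iff.mp (hφ.1 x)).2).symm

/-- The sesquilinear form associated to a state is hermitian. -/
lemma herm {φ : A →ₗ[ℂ] ℂ} (hφ : IsState φ) (x y : A) :
    (starRingEnd ℂ) (φ (star y * x)) = φ (star x * y) := by
  set p := φ (star x * x) with hp
  set q := φ (star y * y) with hq
  set s := φ (star x * y) with hs
  set t := φ (star y * x) with ht
  have h1' : φ (star (x + y) * (x + y)) = p + q + (s + t) := by
    simp only [star_add, add_mul, mul_add, map_add, ← hp, ← hq, ← hs, ← ht]
    ring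
  have h1 : (p + q + (s + t)).im = 0 := h1' ▸ im_eq_zero hφ (x + y)
  have h2' : φ (star (x + Complex.I • y) * (x + Complex.I • y))
      = p + q + (Complex.I * s - Complex.I * t) := by
    simp only [star_add, star_smul, Complex.star_def, Complex.conj_I, add_mul, mul_add,
      neg_smul, neg_mul, mul_neg, smul_mul_assoc, mul_smul_comm, smul_smul, Complex.I_mul_I,
      map_add, map_neg, map_smul, smul_eq_mul, ← hp, ← hq, ← hs, ← ht]
    ring_nf
    rw [Complex.I_sq]
    ring
  have h2 : (p + q + (Complex.I * s - Complex.I * t)).im = 0 :=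
    h2' ▸ im_eq_zero hφ (x + Complex.I • y)
  have hpim : p.im = 0 := im_eq_zero hφ x
  have hqim : q.im = 0 := im_eq_zero hφ y
  simp only [Complex.add_im, Complex.sub_im, Complex.mul_im, Complex.I_re, Complex.I_im,
    hpim, hqim, zero_mul, one_mul, mul_zero, zero_add, add_zero, mul_one] at h1 h2
  apply Complex.ext
  · simp only [Complex.conj_re]
    linarith
  · simp only [Complex.conj_im]
    linarith

lemma herm' {φ : A →ₗ[ℂ] ℂ} (hφ : IsState φ) (y : A) :
    φ (star y) = (starRingEnd ℂ) (φ y) := by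
  have := herm hφ (1 : A) y
  simp only [mul_one, star_one, one_mul] at this
  rw [← this, Complex.conj_conj]

/-- The pre-inner-product core given by a state. -/
noncomputable def stateCore (φ : A →ₗ[ℂ] ℂ) (hφ : IsState φ) :
    PreInnerProductSpace.Core ℂ A where
  inner x y := φ (star x * y)
  conj_inner_symm x y := herm hφ x y
  re_inner_nonneg x := (Complex.nonneg_iff.mp (hφ.1 x)).1
  add_left x y z := by simp [star_add, add_mul]
  smul_left x y r := by
    simp [star_smul, smul_mul_assoc, Complex.star_def]

/-- Cauchy–Schwarz for states. -/
lemma cs {φ : A →ₗ[ℂ] ℂ} (hφ : IsState φ) (x y : A) :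
    ‖φ (star x * y)‖ ^ 2
      ≤ (φ (star x * x)).re * (φ (star y * y)).re := by
  have h : ‖φ (star x * y)‖ * ‖φ (star y * x)‖
      ≤ (φ (star x * x)).re * (φ (star y * y)).re :=
    @InnerProductSpace.Core.inner_mul_inner_self_le ℂ A _ _ _ (stateCore φ hφ) x y
  have habs : ‖φ (star y * x)‖ = ‖φ (star x * y)‖ := by
    rw [← herm hφ x y, RCLike.norm_conj]
  rw [habs] at h
  simpa [pow_two] using h

lemma re_le {φ : A →ₗ[ℂ] ℂ} (hφ : IsState φ) (x : A) :
    (φ (star x * x)).re ≤ ‖x‖ ^ 2 := by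
  letI := CStarAlgebra.spectralOrder A
  letI := CStarAlgebra.spectralOrderedRing A
  have hsa : IsSelfAdjoint (star x * x) := IsSelfAdjoint.star_mul_self x
  have hle : star x * x ≤ algebraMap ℝ A ‖star x * x‖ :=
    IsSelfAdjoint.le_algebraMap_norm_self hsa
  set d : A := algebraMap ℝ A ‖star x * x‖ - star x * x with hd
  have hdn : (0 : A) ≤ d := sub_nonneg.mpr hle
  have hds : d = star (CFC.sqrt d) * CFC.sqrt d := by
    have h1 : CFC.sqrt d * CFC.sqrt d = d := CFC.sqrt_mul_sqrt_self d hdn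
    have h2 : IsSelfAdjoint (CFC.sqrt d) := IsSelfAdjoint.of_nonneg (CFC.sqrt_nonneg d)
    rw [h2.star_eq, h1]
  have h0 : 0 ≤ φ d := by rw [hds]; exact hφ.1 _
  have hmap : φ (algebraMap ℝ A ‖star x * x‖) = (‖star x * x‖ : ℂ) := by
    rw [IsScalarTower.algebraMap_apply ℝ ℂ A, Algebra.algebraMap_eq_smul_one, map_smul,
      hφ.2, smul_eq_mul, mul_one]
    simp
  have hre := (Complex.nonneg_iff.mp h0).1
  rw [hd, map_sub, hmap] at hre
  simp only [Complex.sub_re, Complex.ofReal_re] at hre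
  have hnorm : ‖star x * x‖ = ‖x‖ ^ 2 := by
    rw [CStarRing.norm_star_mul_self, pow_two]
  linarith

lemma abs_le_norm {φ : A →ₗ[ℂ] ℂ} (hφ : IsState φ) (x : A) :
    ‖φ x‖ ≤ ‖x‖ := by
  have h := cs hφ 1 x
  simp only [star_one, one_mul, hφ.2, Complex.one_re] at h
  have h1 : ‖φ x‖ ^ 2 ≤ ‖x‖ ^ 2 := by
    calc ‖φ x‖ ^ 2 ≤ (φ (star x * x)).re := by simpa using h
      _ ≤ ‖x‖ ^ 2 := re_le hφ x
  exact sq_le_imp (norm_nonneg _) (norm_nonneg x) h1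

/-- Buzano-type inequality for states. -/
lemma buzano {φ : A →ₗ[ℂ] ℂ} (hφ : IsState φ) (x y : A) :
    2 * (‖φ (star x)‖ * ‖φ y‖)
      ≤ ‖x‖ * ‖y‖ + ‖φ (star x * y)‖ := by
  set z := φ y with hz
  set R : A := (2 * z) • (1 : A) - y with hR
  have hsty : φ (star y) = (starRingEnd ℂ) z := herm' hφ y
  have hR1 : φ (star x * R) = 2 * z * φ (star x) - φ (star x * y) := by
    rw [hR, mul_sub, map_sub, mul_smul_comm, map_smul, mul_one, smul_eq_mul]
  have hR2 : φ (star R * R) = φ (star y * y) := by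
    have hstR : star R = ((starRingEnd ℂ) (2 * z)) • (1 : A) - star y := by
      rw [hR, star_sub, star_smul, star_one, Complex.star_def]
    rw [hstR, hR]
    simp only [sub_mul, mul_sub, smul_mul_assoc, mul_smul_comm, one_mul, mul_one,
      smul_smul, map_sub, map_smul, smul_eq_mul, hφ.2, hsty, ← hz, map_mul, map_ofNat]
    ring
  have hcs := cs hφ x R
  rw [hR2] at hcs
  have hxx := re_le hφ x
  have hyy := re_le hφ y
  have hxx0 : 0 ≤ (φ (star x * x)).re := (Complex.nonneg_iff.mp (hφ.1 x)).1
  have hyy0 : 0 ≤ (φ (star y * y)).re := (Complex.nonneg_iff.mp (hφ.1 y)).1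
  have hsq : ‖φ (star x * R)‖ ^ 2 ≤ (‖x‖ * ‖y‖) ^ 2 := by
    calc ‖φ (star x * R)‖ ^ 2
        ≤ (φ (star x * x)).re * (φ (star y * y)).re := hcs
      _ ≤ ‖x‖ ^ 2 * ‖y‖ ^ 2 := mul_le_mul hxx hyy hyy0 (by positivity)
      _ = (‖x‖ * ‖y‖) ^ 2 := by ring
  have habsR : ‖φ (star x * R)‖ ≤ ‖x‖ * ‖y‖ :=
    sq_le_imp (norm_nonneg _)
      (mul_nonneg (norm_nonneg x) (norm_nonneg y)) hsq
  have htri : ‖2 * z * φ (star x)‖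
      ≤ ‖φ (star x * R)‖ + ‖φ (star x * y)‖ := by
    rw [hR1]
    calc ‖2 * z * φ (star x)‖
        = ‖(2 * z * φ (star x) - φ (star x * y)) + φ (star x * y)‖ := by
          ring_nf
      _ ≤ _ := norm_add_le _ _
  have h2z : ‖2 * z * φ (star x)‖
      = 2 * (‖φ (star x)‖ * ‖z‖) := by
    rw [norm_mul, norm_mul, Complex.norm_two]
    ring
  calc 2 * (‖φ (star x)‖ * ‖φ y‖)
      = ‖2 * z * φ (star x)‖ := by rw [h2z, hz]
    _ ≤ ‖φ (star x * R)‖ + ‖φ (star x * y)‖ := htri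
    _ ≤ ‖x‖ * ‖y‖ + ‖φ (star x * y)‖ := by linarith

/-- For a nonnegative value of a state, the absolute value is the real part. -/
lemma abs_eq_re {w : ℂ} (hw : 0 ≤ w) : ‖w‖ = w.re := by
  obtain ⟨h1, h2⟩ := Complex.nonneg_iff.mp hw
  have : w = (w.re : ℂ) := Complex.ext rfl (by simp [← h2])
  rw [this, Complex.norm_real, Real.norm_eq_abs, abs_of_nonneg h1]
  simp

/-- Key inequality, first form. -/
lemma key1 {φ : A →ₗ[ℂ] ℂ} (hφ : IsState φ) (a : A) :
    ‖φ a‖ ^ 3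
      ≤ (‖a‖ ^ 3 + ‖φ (star a * a ^ 2)‖) / 2 := by
  have hb := buzano hφ (star a * a) a
  have hstx : star (star a * a) = star a * a := by
    rw [star_mul, star_star]
  rw [hstx] at hb
  have hnx : ‖star a * a‖ = ‖a‖ ^ 2 := by
    rw [CStarRing.norm_star_mul_self, pow_two]
  have hmul : (star a * a) * a = star a * a ^ 2 := by
    rw [mul_assoc, pow_two]
  rw [hnx, hmul] at hb
  have habs : ‖φ (star a * a)‖ = (φ (star a * a)).re :=
    abs_eq_re (hφ.1 a)
  rw [habs] at hb
  -- hb : 2 * ((φ (star a * a)).re * |φ a|) ≤ ‖a‖^2 * ‖a‖ + |φ (star a * a^2)|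
  have hcs : ‖φ a‖ ^ 2 ≤ (φ (star a * a)).re := by
    have h := cs hφ 1 a
    simpa [hφ.2] using h
  have h0 : 0 ≤ ‖φ a‖ := norm_nonneg _
  have h3 : ‖φ a‖ ^ 3 ≤ (φ (star a * a)).re * ‖φ a‖ := by
    calc ‖φ a‖ ^ 3 = ‖φ a‖ ^ 2 * ‖φ a‖ := by ring
      _ ≤ (φ (star a * a)).re * ‖φ a‖ :=
        mul_le_mul_of_nonneg_right hcs h0
  nlinarith [norm_nonneg a]

/-- Key inequality, second form. -/
lemma key2 {φ : A →ₗ[ℂ] ℂ} (hφ : IsState φ) (a : A) :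
    ‖φ a‖ ^ 3
      ≤ (‖a‖ ^ 3 + ‖φ (a ^ 2 * star a)‖) / 2 := by
  have hb := buzano hφ (star a) (a * star a)
  rw [star_star] at hb
  have hny : ‖a * star a‖ = ‖a‖ ^ 2 := by
    rw [CStarRing.norm_self_mul_star, pow_two]
  have hmul : a * (a * star a) = a ^ 2 * star a := by
    rw [← mul_assoc, ← pow_two]
  rw [hny, hmul, norm_star] at hb
  have hpos : 0 ≤ φ (a * star a) := by
    have := hφ.1 (star a)
    rwa [star_star] at this
  have habs : ‖φ (a * star a)‖ = (φ (a * star a)).re := abs_eq_re hpos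
  rw [habs] at hb
  have hcs : ‖φ a‖ ^ 2 ≤ (φ (a * star a)).re := by
    have h := cs hφ 1 (star a)
    have habs' : ‖φ (star a)‖ = ‖φ a‖ := by
      rw [herm' hφ a, Complex.norm_conj]
    simp only [star_one, one_mul, hφ.2, Complex.one_re, star_star, one_mul] at h
    rw [habs'] at h
    simpa using h
  have h0 : 0 ≤ ‖φ a‖ := norm_nonneg _
  have h3 : ‖φ a‖ ^ 3 ≤ (φ (a * star a)).re * ‖φ a‖ := by
    calc ‖φ a‖ ^ 3 = ‖φ a‖ ^ 2 * ‖φ a‖ := by ring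
      _ ≤ (φ (a * star a)).re * ‖φ a‖ :=
        mul_le_mul_of_nonneg_right hcs h0
  nlinarith [norm_nonneg a]

/-- The set of state values. -/
def stateSet (a : A) : Set ℝ :=
  {r : ℝ | ∃ φ : A →ₗ[ℂ] ℂ, IsState φ ∧ r = ‖φ a‖}

lemma numRadius_eq (a : A) : numRadius a = sSup (stateSet a) := rfl

lemma stateSet_nonneg {a : A} {r : ℝ} (hr : r ∈ stateSet a) : 0 ≤ r := by
  obtain ⟨φ, hφ, rfl⟩ := hr
  exact norm_nonneg _

lemma stateSet_le_norm {a : A} {r : ℝ} (hr : r ∈ stateSet a) : r ≤ ‖a‖ := by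
  obtain ⟨φ, hφ, rfl⟩ := hr
  exact abs_le_norm hφ a

lemma bddAbove_stateSet (a : A) : BddAbove (stateSet a) :=
  ⟨‖a‖, fun _ hr => stateSet_le_norm hr⟩

lemma numRadius_nonneg (a : A) : 0 ≤ numRadius a :=
  Real.sSup_nonneg fun _ hr => stateSet_nonneg hr

lemma numRadius_le_norm (a : A) : numRadius a ≤ ‖a‖ :=
  Real.sSup_le (fun _ hr => stateSet_le_norm hr) (norm_nonneg a)

lemma le_numRadius {a : A} {r : ℝ} (hr : r ∈ stateSet a) : r ≤ numRadius a :=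
  le_csSup (bddAbove_stateSet a) hr

end NumRadiusAux

open NumRadiusAux in
/-- Remark 2.17:
`v(a)³ ≤ (1/2)·‖a‖³ + (1/2)·min{v(a*a²), v(a²a*)}`; moreover if `v(a) = ‖a‖` then
`v(a*a²) = v(a²a*) = ‖a‖³`. -/
theorem numRadius_cube_le_min_half
    {A : Type*} [CStarAlgebra A] (a : A) :
    numRadius a ^ 3 ≤
        (1 / 2) * ‖a‖ ^ 3
          + (1 / 2) * min (numRadius (star a * a ^ 2)) (numRadius (a ^ 2 * star a)) ∧
      (numRadius a = ‖a‖ →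
        numRadius (star a * a ^ 2) = ‖a‖ ^ 3 ∧ numRadius (a ^ 2 * star a) = ‖a‖ ^ 3) := by
  set v1 := numRadius (star a * a ^ 2) with hv1
  set v2 := numRadius (a ^ 2 * star a) with hv2
  set C : ℝ := (1 / 2) * ‖a‖ ^ 3 + (1 / 2) * min v1 v2 with hC
  have hv1n : 0 ≤ v1 := numRadius_nonneg _
  have hv2n : 0 ≤ v2 := numRadius_nonneg _
  have hCn : 0 ≤ C := by
    have : 0 ≤ min v1 v2 := le_min hv1n hv2n
    positivity
  -- each element of the state set satisfies the cube bound
  have hkey : ∀ r ∈ stateSet a, r ^ 3 ≤ C := by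
    rintro r ⟨φ, hφ, rfl⟩
    have h1 : ‖φ a‖ ^ 3 ≤ (‖a‖ ^ 3 + v1) / 2 := by
      refine (key1 hφ a).trans ?_
      have : ‖φ (star a * a ^ 2)‖ ≤ v1 :=
        le_numRadius ⟨φ, hφ, rfl⟩
      linarith
    have h2 : ‖φ a‖ ^ 3 ≤ (‖a‖ ^ 3 + v2) / 2 := by
      refine (key2 hφ a).trans ?_
      have : ‖φ (a ^ 2 * star a)‖ ≤ v2 :=
        le_numRadius ⟨φ, hφ, rfl⟩
      linarith
    rcases le_total v1 v2 with h | h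
    · rw [hC, min_eq_left h]; linarith
    · rw [hC, min_eq_right h]; linarith
  -- hence the sup cube bound
  have hmain : numRadius a ^ 3 ≤ C := by
    have hle : numRadius a ≤ C ^ ((3 : ℝ)⁻¹) := by
      rw [numRadius_eq]
      refine Real.sSup_le (fun r hr => ?_) (Real.rpow_nonneg hCn _)
      have hr0 : 0 ≤ r := stateSet_nonneg hr
      have hr3 : r ^ (3 : ℕ) ≤ C := hkey r hr
      calc r = (r ^ (3 : ℕ)) ^ ((3 : ℝ)⁻¹) := by
            rw [← Real.rpow_natCast r 3, ← Real.rpow_mul hr0]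
            norm_num
        _ ≤ C ^ ((3 : ℝ)⁻¹) := Real.rpow_le_rpow (by positivity) hr3 (by norm_num)
    calc numRadius a ^ 3 ≤ (C ^ ((3 : ℝ)⁻¹)) ^ (3 : ℕ) :=
          pow_le_pow_left₀ (numRadius_nonneg a) hle 3
      _ = C := by
          rw [← Real.rpow_natCast (C ^ ((3 : ℝ)⁻¹)) 3, ← Real.rpow_mul hCn]
          norm_num
  refine ⟨hmain, fun hva => ?_⟩
  -- second part
  have hmin : ‖a‖ ^ 3 ≤ min v1 v2 := by
    rw [hva] at hmain
    rw [hC] at hmain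
    linarith
  have hub1 : v1 ≤ ‖a‖ ^ 3 := by
    refine (numRadius_le_norm _).trans ?_
    calc ‖star a * a ^ 2‖ ≤ ‖star a‖ * ‖a ^ 2‖ := norm_mul_le _ _
      _ ≤ ‖a‖ * (‖a‖ * ‖a‖) := by
          rw [norm_star]
          refine mul_le_mul_of_nonneg_left ?_ (norm_nonneg a)
          rw [pow_two]
          exact norm_mul_le a a
      _ = ‖a‖ ^ 3 := by ring
  have hub2 : v2 ≤ ‖a‖ ^ 3 := by
    refine (numRadius_le_norm _).trans ?_
    calc ‖a ^ 2 * star a‖ ≤ ‖a ^ 2‖ * ‖star a‖ := norm_mul_le _ _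
      _ ≤ ‖a‖ * ‖a‖ * ‖a‖ := by
          rw [norm_star]
          refine mul_le_mul_of_nonneg_right ?_ (norm_nonneg a)
          rw [pow_two]
          exact norm_mul_le a a
      _ = ‖a‖ ^ 3 := by ring
  constructor
  · exact le_antisymm hub1 ((le_min_iff.mp hmin).1)
  · exact le_antisymm hub2 ((le_min_iff.mp hmin).2)
end
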